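/- arXiv:2203.12008 — 6 statements merged into one kernel-verified Lean document; each statement's English description precedes it below -/
import Mathlib

section
/- Let f(z) = Σ_{n≥0} a_n z^n be a power series with a_n ≥ 0 for all n, convergent on |z| < 1, and suppose there are constants c, C > 0 with c/(1−r) ≤ f(r) and f'(r) ≤ C/(1−r)² for all r ∈ (0,1). Then for every r ∈ (0,1) and every θ ∈ [−π, π], |f(r e^{iθ})| ≥ (1 − (C/c)·|θ|/(1−r)) · f(r). In particular, if |θ| < (c/C)(1−r) then f(r e^{iθ}) ≠ 0. -/
lemma exp_I_sub_one_le (t : ℝ) :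
    ‖Complex.exp (t * Complex.I) - 1‖ ≤ |t| := by
  have h : Complex.exp (t * Complex.I) - 1
      = Complex.ofReal (Real.cos t - 1) + Complex.ofReal (Real.sin t) * Complex.I := by
    rw [Complex.exp_mul_I]; push_cast; ring
  rw [h, Complex.norm_add_mul_I]
  have h2 : (Real.cos t - 1) ^ 2 + Real.sin t ^ 2 = (2 * Real.sin (t / 2)) ^ 2 := by
    have hs := Real.sin_sq_eq_half_sub (t / 2)
    have hct : Real.cos (2 * (t / 2)) = Real.cos t := by congr 1; ring
    nlinarith [Real.sin_sq_add_cos_sq t]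
  rw [h2, Real.sqrt_sq_eq_abs, abs_mul]
  have hh := Real.abs_sin_le_abs (x := t / 2)
  rw [abs_div] at hh
  have : |(2:ℝ)| = 2 := by norm_num
  rw [this] at hh ⊢
  linarith

/-- For a power series with nonnegative coefficients converging on the unit
disk, with `c/(1-r) ≤ f(r)` and `f'(r) ≤ C/(1-r)²` on `(0,1)`, one has
`|f(re^{iθ})| ≥ (1 - (C/c)|θ|/(1-r)) f(r)`; in particular `f(re^{iθ}) ≠ 0` when
`|θ| < (c/C)(1-r)`. -/
theorem stmt5 (a : ℕ → ℝ) (ha : ∀ n, 0 ≤ a n)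
    (hconv : ∀ z : ℂ, ‖z‖ < 1 → Summable fun n : ℕ => (a n : ℂ) * z ^ n)
    (c C : ℝ) (hc : 0 < c) (hC : 0 < C)
    (hlow : ∀ r : ℝ, r ∈ Set.Ioo (0 : ℝ) 1 →
      c / (1 - r) ≤ ∑' n : ℕ, a n * r ^ n)
    (hderiv : ∀ r : ℝ, r ∈ Set.Ioo (0 : ℝ) 1 →
      deriv (fun x : ℝ => ∑' n : ℕ, a n * x ^ n) r ≤ C / (1 - r) ^ 2) :
    ∀ r : ℝ, r ∈ Set.Ioo (0 : ℝ) 1 → ∀ θ : ℝ, θ ∈ Set.Icc (-Real.pi) Real.pi →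
      ((1 - (C / c) * |θ| / (1 - r)) * ∑' n : ℕ, a n * r ^ n) ≤
          ‖∑' n : ℕ, (a n : ℂ) * (r * Complex.exp (θ * Complex.I)) ^ n‖ ∧
        (|θ| < (c / C) * (1 - r) →
          (∑' n : ℕ, (a n : ℂ) * (r * Complex.exp (θ * Complex.I)) ^ n) ≠ 0) := by
  intro r hr θ hθ
  obtain ⟨hr0, hr1⟩ := hr
  -- real summability at any |x| < 1
  have hsumR : ∀ x : ℝ, |x| < 1 → Summable fun n : ℕ => a n * x ^ n := by
    intro x hx
    have := hconv (x : ℂ) (by simpa using hx)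
    rw [← Complex.summable_ofReal]
    convert this using 2 with n
    push_cast; ring
  -- set up s, t
  set s : ℝ := (1 + r) / 2 with hs
  set t : ℝ := (3 + r) / 4 with ht
  have hrs : r < s := by rw [hs]; linarith
  have hs0 : 0 < s := by rw [hs]; linarith
  have hst : s < t := by rw [hs, ht]; linarith
  have ht1 : t < 1 := by rw [ht]; linarith
  have ht0 : 0 < t := by rw [ht]; linarith
  -- bound on a n * t ^ n
  have hsumt : Summable fun n : ℕ => a n * t ^ n := hsumR t (by rw [abs_of_pos ht0]; exact ht1)
  set M : ℝ := ∑' n, a n * t ^ n with hMdef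
  have hM : ∀ n, a n * t ^ n ≤ M := fun n =>
    Summable.le_tsum hsumt n (fun m _ => mul_nonneg (ha m) (by positivity))
  -- summable bound for derivatives
  set u : ℕ → ℝ := fun n => M / s * (n * (s / t) ^ n) with hu
  have hust : s / t < 1 := (div_lt_one ht0).2 hst
  have husum : Summable u := by
    apply Summable.mul_left
    have := summable_pow_mul_geometric_of_norm_lt_one (R := ℝ) 1 (r := s / t)
      (by rw [Real.norm_eq_abs, abs_of_pos (div_pos hs0 ht0)]; exact hust)
    simpa using this
  -- term derivative
  have hgd : ∀ (n : ℕ) (y : ℝ), HasDerivAt (fun x : ℝ => a n * x ^ n)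
      (a n * (n * y ^ (n - 1))) y := fun n y => (hasDerivAt_pow n y).const_mul (a n)
  -- bound on derivative on Ioo (-s) s
  have hgb : ∀ (n : ℕ) (y : ℝ), y ∈ Set.Ioo (-s) s → ‖a n * (n * y ^ (n - 1))‖ ≤ u n := by
    intro n y hy
    have hys : |y| ≤ s := by rw [abs_le]; exact ⟨hy.1.le, hy.2.le⟩
    rw [Real.norm_eq_abs, abs_mul, abs_of_nonneg (ha n), abs_mul, Nat.abs_cast, abs_pow]
    match n with
    | 0 => simp [hu]
    | (m + 1) =>
      simp only [Nat.add_sub_cancel]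
      push_cast
      have h1 : |y| ^ m ≤ s ^ m := pow_le_pow_left₀ (abs_nonneg y) hys _
      have han : a (m + 1) ≤ M / t ^ (m + 1) :=
        (le_div_iff₀ (pow_pos ht0 _)).2 (hM (m + 1))
      have hnn : (0:ℝ) ≤ ((m:ℝ) + 1) * s ^ m := by positivity
      calc a (m + 1) * (((m:ℝ) + 1) * |y| ^ m)
          ≤ a (m + 1) * (((m:ℝ) + 1) * s ^ m) := by
            apply mul_le_mul_of_nonneg_left _ (ha _)
            exact mul_le_mul_of_nonneg_left h1 (by positivity)
        _ ≤ (M / t ^ (m + 1)) * (((m:ℝ) + 1) * s ^ m) :=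
            mul_le_mul_of_nonneg_right han hnn
        _ = u (m + 1) := by
            have gen : ∀ S T : ℝ, S ≠ 0 → T ≠ 0 →
                (M / T ^ (m + 1)) * (((m:ℝ) + 1) * S ^ m)
                  = M / S * (((m:ℝ) + 1) * (S / T) ^ (m + 1)) := by
              intro S T hS hT
              rw [div_pow]
              field_simp
              ring
            rw [hu]
            push_cast
            exact gen s t hs0.ne' ht0.ne'
  -- derivative of the sum
  have hIoo : r ∈ Set.Ioo (-s) s := ⟨by linarith, hrs⟩
  have hsumr : Summable fun n : ℕ => a n * r ^ n :=
    hsumR r (by rw [abs_of_pos hr0]; exact hr1)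
  have hDer : HasDerivAt (fun x : ℝ => ∑' n : ℕ, a n * x ^ n)
      (∑' n : ℕ, a n * (n * r ^ (n - 1))) r :=
    hasDerivAt_tsum_of_isPreconnected husum isOpen_Ioo (convex_Ioo _ _).isPreconnected
      (fun n y _ => hgd n y) hgb hIoo hsumr hIoo
  set D : ℝ := ∑' n : ℕ, a n * (n * r ^ (n - 1)) with hDdef
  have hDC : D ≤ C / (1 - r) ^ 2 := by
    have := hderiv r ⟨hr0, hr1⟩
    rwa [hDer.deriv] at this
  have hDsum : Summable fun n : ℕ => a n * ((n : ℝ) * r ^ (n - 1)) := by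
    apply Summable.of_nonneg_of_le (fun n => mul_nonneg (ha n) (by positivity)) _ husum
    intro n
    have := hgb n r hIoo
    rwa [Real.norm_eq_abs, abs_of_nonneg (mul_nonneg (ha n) (by positivity))] at this
  have hD0 : 0 ≤ D := tsum_nonneg fun n => mul_nonneg (ha n) (by positivity)
  -- complex series
  set z : ℂ := (r : ℂ) * Complex.exp (θ * Complex.I) with hz
  have hznorm : ‖z‖ < 1 := by
    rw [hz, norm_mul, Complex.norm_exp_ofReal_mul_I, mul_one, Complex.norm_real,
      Real.norm_eq_abs, abs_of_pos hr0]
    exact hr1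
  have S1 : Summable fun n : ℕ => (a n : ℂ) * z ^ n := hconv z hznorm
  have S2 : Summable fun n : ℕ => (a n : ℂ) * (r : ℂ) ^ n := by
    apply hconv
    rw [Complex.norm_real, Real.norm_eq_abs, abs_of_pos hr0]
    exact hr1
  set A : ℝ := ∑' n : ℕ, a n * r ^ n with hAdef
  have hA : c / (1 - r) ≤ A := hlow r ⟨hr0, hr1⟩
  have hApos : 0 < A := lt_of_lt_of_le (div_pos hc (by linarith)) hA
  have hre : (∑' n : ℕ, (a n : ℂ) * (r : ℂ) ^ n) = ((A : ℝ) : ℂ) := by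
    rw [hAdef, Complex.ofReal_tsum]
    congr 1 with n
    push_cast
    ring
  -- term identity
  have hterm : ∀ n : ℕ, (a n : ℂ) * z ^ n - (a n : ℂ) * (r : ℂ) ^ n
      = (a n : ℂ) * (r : ℂ) ^ n * (Complex.exp (((n * θ : ℝ) : ℂ) * Complex.I) - 1) := by
    intro n
    have h1 : z ^ n = (r : ℂ) ^ n * Complex.exp (((n * θ : ℝ) : ℂ) * Complex.I) := by
      rw [hz, mul_pow, ← Complex.exp_nat_mul]
      congr 2
      push_cast
      ring
    rw [h1]
    ring
  have hdiff : (∑' n : ℕ, (a n : ℂ) * z ^ n) - (∑' n : ℕ, (a n : ℂ) * (r : ℂ) ^ n)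
      = ∑' n : ℕ, (a n : ℂ) * (r : ℂ) ^ n
          * (Complex.exp (((n * θ : ℝ) : ℂ) * Complex.I) - 1) := by
    rw [← Summable.tsum_sub S1 S2]
    exact tsum_congr hterm
  -- norm bound on each term
  have hnormb : ∀ n : ℕ, ‖(a n : ℂ) * (r : ℂ) ^ n
      * (Complex.exp (((n * θ : ℝ) : ℂ) * Complex.I) - 1)‖
        ≤ |θ| * (a n * ((n : ℝ) * r ^ (n - 1))) := by
    intro n
    rw [norm_mul, norm_mul, Complex.norm_real, Real.norm_eq_abs, abs_of_nonneg (ha n),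
      norm_pow, Complex.norm_real, Real.norm_eq_abs, abs_of_pos hr0]
    have hb : ‖Complex.exp (((n * θ : ℝ) : ℂ) * Complex.I) - 1‖ ≤ (n : ℝ) * |θ| := by
      have := exp_I_sub_one_le ((n : ℝ) * θ)
      rw [abs_mul, Nat.abs_cast] at this
      exact this
    calc a n * r ^ n * ‖Complex.exp (((n * θ : ℝ) : ℂ) * Complex.I) - 1‖
        ≤ a n * r ^ n * ((n : ℝ) * |θ|) := by
          apply mul_le_mul_of_nonneg_left hb (mul_nonneg (ha n) (by positivity))
      _ ≤ |θ| * (a n * ((n : ℝ) * r ^ (n - 1))) := by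
          match n with
          | 0 => simp
          | (m + 1) =>
            simp only [Nat.add_sub_cancel, pow_succ]
            push_cast
            have hX : (0:ℝ) ≤ |θ| * (a (m + 1) * (((m:ℝ) + 1) * r ^ m)) :=
              mul_nonneg (abs_nonneg θ) (mul_nonneg (ha _) (by positivity))
            calc a (m + 1) * (r ^ m * r) * (((m:ℝ) + 1) * |θ|)
                = (|θ| * (a (m + 1) * (((m:ℝ) + 1) * r ^ m))) * r := by ring
              _ ≤ (|θ| * (a (m + 1) * (((m:ℝ) + 1) * r ^ m))) * 1 :=
                  mul_le_mul_of_nonneg_left hr1.le hX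
              _ = |θ| * (a (m + 1) * (((m:ℝ) + 1) * r ^ m)) := mul_one _
  -- the difference bound
  have hdiffb : ‖(∑' n : ℕ, (a n : ℂ) * z ^ n)
      - (∑' n : ℕ, (a n : ℂ) * (r : ℂ) ^ n)‖ ≤ |θ| * D := by
    rw [hdiff]
    exact tsum_of_norm_bounded (hDsum.hasSum.mul_left |θ|) hnormb
  have h1r : (0:ℝ) < 1 - r := by linarith
  have hkey : |θ| * D ≤ (C / c) * |θ| / (1 - r) * A := by
    have hcA : c ≤ A * (1 - r) := (div_le_iff₀ h1r).1 hA
    have hDC' : D * (1 - r) ^ 2 ≤ C := (le_div_iff₀ (pow_pos h1r 2)).1 hDC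
    have hform : (C / c) * |θ| / (1 - r) * A = C * |θ| * A / (c * (1 - r)) := by
      field_simp
    rw [hform, le_div_iff₀ (by positivity)]
    calc |θ| * D * (c * (1 - r))
        ≤ |θ| * D * ((A * (1 - r)) * (1 - r)) := by
          exact mul_le_mul_of_nonneg_left (mul_le_mul_of_nonneg_right hcA h1r.le)
            (mul_nonneg (abs_nonneg θ) hD0)
      _ = |θ| * A * (D * (1 - r) ^ 2) := by ring
      _ ≤ |θ| * A * C :=
          mul_le_mul_of_nonneg_left hDC' (mul_nonneg (abs_nonneg θ) hApos.le)
      _ = C * |θ| * A := by ring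
  have habs_r : ‖∑' n : ℕ, (a n : ℂ) * (r : ℂ) ^ n‖ = A := by
    rw [hre, Complex.norm_real, Real.norm_eq_abs, abs_of_pos hApos]
  clear_value s t M u D z A
  have hmain : (1 - (C / c) * |θ| / (1 - r)) * A
      ≤ ‖∑' n : ℕ, (a n : ℂ) * z ^ n‖ := by
    have htri := norm_sub_norm_le (∑' n : ℕ, (a n : ℂ) * (r : ℂ) ^ n)
      (∑' n : ℕ, (a n : ℂ) * z ^ n)
    rw [norm_sub_rev] at htri
    rw [habs_r] at htri
    have hcomb : A - ‖∑' n : ℕ, (a n : ℂ) * z ^ n‖ ≤ |θ| * D :=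
      htri.trans hdiffb
    calc (1 - (C / c) * |θ| / (1 - r)) * A
        = A - (C / c) * |θ| / (1 - r) * A := by ring
      _ ≤ ‖∑' n : ℕ, (a n : ℂ) * z ^ n‖ := by
          linarith only [hkey, hcomb]
  refine ⟨hmain, ?_⟩
  intro hsmall h0
  rw [h0] at hmain
  simp only [norm_zero] at hmain
  have hq : (C / c) * |θ| / (1 - r) < 1 := by
    rw [div_lt_one h1r]
    calc (C / c) * |θ| < (C / c) * ((c / C) * (1 - r)) := by
          apply mul_lt_mul_of_pos_left hsmall (by positivity)
      _ = 1 - r := by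
          field_simp
  exact absurd hmain (not_le.2 (mul_pos (by linarith) hApos))
end

section
/- There exists an absolute constant c > 0 such that for every r ∈ (0,1) and every θ ∈ [−π, π), 1/(1−r) − 1/|1 − r e^{iθ}| ≥ c · r · min(|θ|, 1−r)² / (1−r)³. -/
set_option maxHeartbeats 1000000 in
/-- There is an absolute constant `c > 0` such that for all `r ∈ (0,1)` and
`θ ∈ [-π, π)`, `1/(1-r) - 1/|1 - re^{iθ}| ≥ c r min(|θ|, 1-r)² / (1-r)³`. -/
theorem stmt8 :
    ∃ c : ℝ, 0 < c ∧
      ∀ r : ℝ, r ∈ Set.Ioo (0 : ℝ) 1 → ∀ θ : ℝ, θ ∈ Set.Ico (-Real.pi) Real.pi →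
        c * r * (min |θ| (1 - r)) ^ 2 / (1 - r) ^ 3 ≤
          1 / (1 - r) - 1 / ‖1 - (r : ℂ) * Complex.exp (θ * Complex.I)‖ := by
  have hπ : 0 < Real.pi := Real.pi_pos
  refine ⟨1 / Real.pi ^ 2, by positivity, ?_⟩
  rintro r ⟨hr0, hr1⟩ θ ⟨hθl, hθr⟩
  have hθpi : |θ| ≤ Real.pi := abs_le.2 ⟨hθl, hθr.le⟩
  set δ : ℝ := 1 - r with hδdef
  have hδ0 : 0 < δ := by simp only [hδdef]; linarith
  set A : ℝ := ‖1 - (r : ℂ) * Complex.exp (θ * Complex.I)‖ with hAdef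
  set s : ℝ := Real.sin (θ / 2) with hsdef
  set m : ℝ := min |θ| δ with hmdef
  set M : ℝ := max |θ| δ with hMdef
  have hM0 : 0 < M := lt_of_lt_of_le hδ0 (le_max_right _ _)
  have hm0 : 0 ≤ m := le_min (abs_nonneg _) hδ0.le
  -- cos θ = 1 - 2 s²
  have hcos : Real.cos θ = 1 - 2 * s ^ 2 := by
    have h := Real.cos_two_mul' (θ / 2)
    rw [mul_div_cancel₀ θ (two_ne_zero)] at h
    have h2 := Real.sin_sq_add_cos_sq (θ / 2)
    rw [h]; rw [← hsdef] at h2 ⊢; linarith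
  -- A² = δ² + 4 r s²
  have hA2 : A ^ 2 = δ ^ 2 + 4 * r * s ^ 2 := by
    rw [hAdef, Complex.sq_norm, Complex.normSq_apply]
    simp only [Complex.sub_re, Complex.sub_im, Complex.one_re, Complex.one_im,
      Complex.mul_re, Complex.mul_im, Complex.ofReal_re, Complex.ofReal_im,
      Complex.exp_ofReal_mul_I_re, Complex.exp_ofReal_mul_I_im]
    have h2 := Real.sin_sq_add_cos_sq θ
    rw [hδdef]
    nlinarith [hcos, h2]
  have hA0 : 0 ≤ A := norm_nonneg _
  have hAδ : δ ≤ A := by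
    nlinarith [hA2, mul_nonneg hr0.le (sq_nonneg s)]
  have hApos : 0 < A := lt_of_lt_of_le hδ0 hAδ
  clear_value A
  -- |s| ≤ |θ|/2, so s² ≤ θ²/4
  have hs_le : s ^ 2 ≤ θ ^ 2 / 4 := by
    have h := Real.abs_sin_le_abs (x := θ / 2)
    have h2 : |s| ^ 2 ≤ |θ / 2| ^ 2 := by
      exact pow_le_pow_left₀ (abs_nonneg _) h 2
    rw [sq_abs, sq_abs] at h2
    nlinarith
  -- s² ≥ θ²/π²
  have hs_ge : θ ^ 2 / Real.pi ^ 2 ≤ s ^ 2 := by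
    have key : ∀ x : ℝ, 0 ≤ x → x ≤ Real.pi → x ^ 2 / Real.pi ^ 2 ≤ Real.sin (x / 2) ^ 2 := by
      intro x hx hxπ
      have h1 : 2 / Real.pi * (x / 2) ≤ Real.sin (x / 2) :=
        Real.mul_le_sin (by linarith) (by linarith)
      have h1' : x / Real.pi ≤ Real.sin (x / 2) := by
        calc x / Real.pi = 2 / Real.pi * (x / 2) := by ring
        _ ≤ _ := h1
      have hx0 : 0 ≤ x / Real.pi := by positivity
      calc x ^ 2 / Real.pi ^ 2 = (x / Real.pi) ^ 2 := by rw [div_pow]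
      _ ≤ Real.sin (x / 2) ^ 2 := by nlinarith
    rcases le_or_gt 0 θ with h | h
    · exact key θ h (by linarith [abs_le.1 hθpi])
    · have := key (-θ) (by linarith) (by rw [abs_of_neg h] at hθpi; linarith)
      rw [neg_div, Real.sin_neg] at this
      simpa [hsdef] using this
  -- m M = |θ| δ
  have hmM : m ^ 2 * M ^ 2 = θ ^ 2 * δ ^ 2 := by
    have h := min_mul_max |θ| δ
    calc m ^ 2 * M ^ 2 = (m * M) ^ 2 := by ring
    _ = (|θ| * δ) ^ 2 := by rw [hmdef, hMdef, h]
    _ = θ ^ 2 * δ ^ 2 := by rw [mul_pow, sq_abs]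
  have hθM : |θ| ≤ M := le_max_left _ _
  have hδM : δ ≤ M := le_max_right _ _
  clear_value s δ m M
  -- A (A + δ) ≤ 4 M²
  have hAM : A * (A + δ) ≤ 4 * M ^ 2 := by
    have hθ2 : θ ^ 2 ≤ M ^ 2 := by nlinarith [sq_abs θ, abs_nonneg θ]
    have hA2M : A ^ 2 ≤ 2 * M ^ 2 := by
      nlinarith [hA2, hθ2, mul_le_mul_of_nonneg_left hs_le hr0.le, sq_nonneg s,
        mul_le_mul_of_nonneg_right hr1.le (by positivity : (0:ℝ) ≤ θ ^ 2 / 4)]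
    nlinarith [sq_nonneg (A - δ)]
  -- key identity
  have hkey : 1 / δ - 1 / A = 4 * r * s ^ 2 / (δ * (A * (A + δ))) := by
    have hne : A + δ ≠ 0 := by positivity
    rw [div_sub_div _ _ hδ0.ne' hApos.ne', div_eq_div_iff (by positivity) (by positivity)]
    ring_nf
    nlinarith [hA2]
  rw [hkey]
  have step1 : 4 * r * s ^ 2 / (δ * (4 * M ^ 2)) ≤ 4 * r * s ^ 2 / (δ * (A * (A + δ))) := by
    apply div_le_div_of_nonneg_left (by positivity) (by positivity)
    exact mul_le_mul_of_nonneg_left hAM hδ0.le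
  have step2 : 1 / Real.pi ^ 2 * r * m ^ 2 / δ ^ 3 ≤ 4 * r * s ^ 2 / (δ * (4 * M ^ 2)) := by
    rw [div_le_div_iff₀ (by positivity) (by positivity)]
    have h1 : r * (θ ^ 2 / Real.pi ^ 2) ≤ r * s ^ 2 :=
      mul_le_mul_of_nonneg_left hs_ge hr0.le
    have hπ2 : (0:ℝ) < Real.pi ^ 2 := by positivity
    -- goal: (1/π²) r m² * (δ * (4 M²)) ≤ 4 r s² * δ³
    have key : r * m ^ 2 * M ^ 2 / Real.pi ^ 2 = r * (θ ^ 2 / Real.pi ^ 2) * δ ^ 2 := by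
      field_simp
      nlinarith [hmM]
    calc 1 / Real.pi ^ 2 * r * m ^ 2 * (δ * (4 * M ^ 2))
        = r * m ^ 2 * M ^ 2 / Real.pi ^ 2 * (4 * δ) := by ring
      _ = r * (θ ^ 2 / Real.pi ^ 2) * δ ^ 2 * (4 * δ) := by rw [key]
      _ ≤ r * s ^ 2 * δ ^ 2 * (4 * δ) := by
          nlinarith [mul_le_mul_of_nonneg_right h1 (show (0:ℝ) ≤ δ ^ 2 * (4 * δ) by positivity)]
      _ = 4 * r * s ^ 2 * δ ^ 3 := by ring
  linarith [step1, step2]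
end

section
/- Let f(z) = Σ_{n≥0} a_n z^n be a power series with a_n ≥ 1 for all n, and suppose there is a constant C > 0 such that a_0 + a_1 + ⋯ + a_n ≤ C(n+1) for every n ≥ 0. Then for every integer i ≥ 0 and every r ∈ (0,1), i!/(1−r)^{i+1} ≤ f^{(i)}(r) ≤ C·(i+1)!/(1−r)^{i+1}. -/
open Filter Set Topology

private lemma pow_le_descFactorial' (n k : ℕ) : (n + 1) ^ k ≤ (n + k).descFactorial k := by
  induction k with
  | zero => simp
  | succ k ih =>
    rw [show n + (k + 1) = (n + k) + 1 from rfl, Nat.succ_descFactorial_succ, pow_succ]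
    calc (n + 1) ^ k * (n + 1) ≤ (n + k).descFactorial k * (n + k + 1) :=
          Nat.mul_le_mul ih (by omega)
      _ = (n + k + 1) * (n + k).descFactorial k := Nat.mul_comm _ _

private lemma summable_pow_geo (k : ℕ) {x : ℝ} (h0 : 0 ≤ x) (h1 : x < 1) :
    Summable (fun n : ℕ => ((n : ℝ) + 1) ^ k * x ^ n) := by
  have h := summable_descFactorial_mul_geometric_of_norm_lt_one (R := ℝ) k
    (r := x) (by rwa [Real.norm_eq_abs, abs_of_nonneg h0])
  refine Summable.of_nonneg_of_le (fun n => by positivity) (fun n => ?_) h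
  have hle : (((n + 1) ^ k : ℕ) : ℝ) ≤ (((n + k).descFactorial k : ℕ) : ℝ) := by
    exact_mod_cast pow_le_descFactorial' n k
  push_cast at hle
  exact mul_le_mul_of_nonneg_right hle (by positivity)

private def PB (b : ℕ → ℝ) : Prop := ∃ (K : ℝ) (k : ℕ), ∀ n, |b n| ≤ K * ((n : ℝ) + 1) ^ k

private lemma PB.congr {b c : ℕ → ℝ} (hb : PB b) (h : ∀ n, b n = c n) : PB c := by
  obtain ⟨K, k, hK⟩ := hb; exact ⟨K, k, fun n => (h n) ▸ hK n⟩

private lemma PB.summable {b : ℕ → ℝ} (hb : PB b) {x : ℝ} (hx : |x| < 1) :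
    Summable (fun n => b n * x ^ n) := by
  obtain ⟨K, k, hK⟩ := hb
  refine Summable.of_norm_bounded ((summable_pow_geo k (abs_nonneg x) hx).mul_left K)
    (fun n => ?_)
  rw [norm_mul, norm_pow, Real.norm_eq_abs, Real.norm_eq_abs, ← mul_assoc]
  exact mul_le_mul_of_nonneg_right (hK n) (by positivity)

private lemma PB.mul {b c : ℕ → ℝ} (hb : PB b) (hc : PB c) : PB (fun n => b n * c n) := by
  obtain ⟨K, k, hK⟩ := hb
  obtain ⟨L, l, hL⟩ := hc
  refine ⟨K * L, k + l, fun n => ?_⟩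
  have h1 : (0 : ℝ) ≤ K * ((n : ℝ) + 1) ^ k := le_trans (abs_nonneg _) (hK n)
  calc |b n * c n| = |b n| * |c n| := abs_mul _ _
    _ ≤ (K * ((n : ℝ) + 1) ^ k) * (L * ((n : ℝ) + 1) ^ l) :=
        mul_le_mul (hK n) (hL n) (abs_nonneg _) h1
    _ = K * L * ((n : ℝ) + 1) ^ (k + l) := by rw [pow_add]; ring

private lemma PB.shift {c : ℕ → ℝ} (i : ℕ) (hc : PB c) : PB (fun n => c (n + i)) := by
  obtain ⟨K, k, hK⟩ := hc
  have hK0 : 0 ≤ K := by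
    have h0 := hK 0; norm_num at h0; exact le_trans (abs_nonneg _) h0
  refine ⟨K * ((i : ℝ) + 1) ^ k, k, fun n => ?_⟩
  calc |c (n + i)| ≤ K * (((n + i : ℕ) : ℝ) + 1) ^ k := hK (n + i)
    _ ≤ K * (((i : ℝ) + 1) * ((n : ℝ) + 1)) ^ k := by
        gcongr
        · push_cast; nlinarith [Nat.cast_nonneg (α := ℝ) n, Nat.cast_nonneg (α := ℝ) i]
    _ = K * ((i : ℝ) + 1) ^ k * ((n : ℝ) + 1) ^ k := by rw [mul_pow]; ring

private lemma PB_descFactorial (i : ℕ) : PB (fun n => (((n + i).descFactorial i : ℕ) : ℝ)) := by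
  refine ⟨((i : ℝ) + 1) ^ i, i, fun n => ?_⟩
  rw [abs_of_nonneg (by positivity)]
  have h1 : ((n + i).descFactorial i : ℕ) ≤ ((i + 1) * (n + 1)) ^ i := by
    calc (n + i).descFactorial i ≤ (n + i) ^ i := Nat.descFactorial_le_pow _ _
      _ ≤ ((i + 1) * (n + 1)) ^ i := Nat.pow_le_pow_left (by nlinarith) i
  calc (((n + i).descFactorial i : ℕ) : ℝ) ≤ ((((i + 1) * (n + 1)) ^ i : ℕ) : ℝ) := by
        exact_mod_cast h1
    _ = ((i : ℝ) + 1) ^ i * ((n : ℝ) + 1) ^ i := by push_cast; rw [mul_pow]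

private lemma PB_linear (m : ℕ) : PB (fun n => (((n + m : ℕ) : ℕ) : ℝ)) := by
  refine ⟨(m : ℝ) + 1, 1, fun n => ?_⟩
  rw [abs_of_nonneg (by positivity), pow_one]
  push_cast
  nlinarith [Nat.cast_nonneg (α := ℝ) n, Nat.cast_nonneg (α := ℝ) m]

private lemma hasDerivAt_tsum_pb {b : ℕ → ℝ} (hb : PB b) {x : ℝ} (hx : |x| < 1) :
    HasDerivAt (fun y : ℝ => ∑' n, b n * y ^ n)
      (∑' n : ℕ, ((n : ℝ) + 1) * b (n + 1) * x ^ n) x := by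
  obtain ⟨K, k, hK⟩ := hb
  have hK0 : 0 ≤ K := by
    have h0 := hK 0; norm_num at h0; exact le_trans (abs_nonneg _) h0
  set ρ : ℝ := (1 + |x|) / 2 with hρdef
  have hρ0 : 0 < ρ := by positivity
  have hρ1 : ρ < 1 := by rw [hρdef]; linarith
  have hxρ : |x| < ρ := by rw [hρdef]; linarith [abs_nonneg x]
  have hxball : x ∈ Metric.ball (0 : ℝ) ρ := by simpa [Real.dist_eq] using hxρ
  have hu : Summable (fun n : ℕ => (K / ρ) * (((n : ℝ) + 1) ^ (k + 1) * ρ ^ n)) :=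
    (summable_pow_geo (k + 1) hρ0.le hρ1).mul_left _
  have hbound : ∀ (n : ℕ), ∀ y ∈ Metric.ball (0 : ℝ) ρ,
      ‖b n * ((n : ℝ) * y ^ (n - 1))‖ ≤ (K / ρ) * (((n : ℝ) + 1) ^ (k + 1) * ρ ^ n) := by
    intro n y hy
    have hyρ : |y| ≤ ρ := by
      have : |y| < ρ := by simpa [Real.dist_eq] using hy
      exact this.le
    have h2 : ρ ^ (n - 1) ≤ ρ ^ n / ρ := by
      cases n with
      | zero =>
        have : 1 * ρ ≤ 1 := by linarith
        simpa using (le_div_iff₀ hρ0).mpr this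
      | succ m => rw [Nat.succ_sub_one, pow_succ, mul_div_assoc, div_self hρ0.ne', mul_one]
    have h3 : |y| ^ (n - 1) ≤ ρ ^ n / ρ := le_trans (pow_le_pow_left₀ (abs_nonneg y) hyρ _) h2
    calc ‖b n * ((n : ℝ) * y ^ (n - 1))‖ = |b n| * ((n : ℝ) * |y| ^ (n - 1)) := by
          rw [Real.norm_eq_abs, abs_mul, abs_mul, abs_pow, Nat.abs_cast]
      _ ≤ (K * ((n : ℝ) + 1) ^ k) * (((n : ℝ) + 1) * (ρ ^ n / ρ)) := by
          refine mul_le_mul (hK n) ?_ (by positivity) (by nlinarith [pow_nonneg (add_nonneg (Nat.cast_nonneg (α := ℝ) n) zero_le_one) k])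
          refine mul_le_mul (by linarith [Nat.cast_nonneg (α := ℝ) n]) h3 (by positivity)
            (by linarith [Nat.cast_nonneg (α := ℝ) n])
      _ = (K / ρ) * (((n : ℝ) + 1) ^ (k + 1) * ρ ^ n) := by
          rw [pow_succ]; field_simp
  have H : HasDerivAt (fun y : ℝ => ∑' n, b n * y ^ n)
      (∑' n : ℕ, b n * ((n : ℝ) * x ^ (n - 1))) x := by
    refine hasDerivAt_tsum_of_isPreconnected hu Metric.isOpen_ball
      ((convex_ball _ _).isPreconnected) (fun n y _ => (hasDerivAt_pow n y).const_mul (b n))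
      hbound (Metric.mem_ball_self hρ0) ?_ hxball
    exact PB.summable ⟨K, k, hK⟩ (by simp)
  have hsum' : Summable (fun n : ℕ => b n * ((n : ℝ) * x ^ (n - 1))) :=
    Summable.of_norm_bounded hu (fun n => hbound n x hxball)
  have hval : ∑' n : ℕ, b n * ((n : ℝ) * x ^ (n - 1))
      = ∑' n : ℕ, ((n : ℝ) + 1) * b (n + 1) * x ^ n := by
    rw [Summable.tsum_eq_zero_add hsum']
    simp only [Nat.cast_zero, pow_zero, zero_mul, mul_zero, zero_add, Nat.add_sub_cancel]
    exact tsum_congr fun n => by push_cast; ring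
  rwa [hval] at H

private lemma iteratedDeriv_tsum_pb (i : ℕ) : ∀ (b : ℕ → ℝ), PB b → ∀ x : ℝ, |x| < 1 →
    iteratedDeriv i (fun y : ℝ => ∑' n, b n * y ^ n) x
      = ∑' n : ℕ, (((n + i).descFactorial i : ℕ) : ℝ) * b (n + i) * x ^ n := by
  induction i with
  | zero => intro b hb x hx; simp
  | succ i ih =>
    intro b hb x hx
    have hb' : PB (fun n => ((n : ℝ) + 1) * b (n + 1)) := by
      refine PB.congr ((PB_linear 1).mul (hb.shift 1)) (fun n => ?_)
      push_cast; ring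
    rw [iteratedDeriv_succ']
    have hmem : x ∈ Metric.ball (0 : ℝ) 1 := by simpa [Real.dist_eq] using hx
    have heq : deriv (fun y : ℝ => ∑' n, b n * y ^ n)
        =ᶠ[𝓝 x] (fun y : ℝ => ∑' n : ℕ, (((n : ℝ) + 1) * b (n + 1)) * y ^ n) := by
      filter_upwards [Metric.isOpen_ball.mem_nhds hmem] with y hy
      exact (hasDerivAt_tsum_pb hb (by simpa [Real.dist_eq] using hy)).deriv
    rw [heq.iteratedDeriv_eq i, ih _ hb' x hx]
    refine tsum_congr fun n => ?_
    have hd' : (((n + i + 1).descFactorial (i + 1) : ℕ) : ℝ)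
        = ((n : ℝ) + i + 1) * (((n + i).descFactorial i : ℕ) : ℝ) := by
      rw [Nat.succ_descFactorial_succ]; push_cast; ring
    rw [show n + (i + 1) = n + i + 1 from rfl, hd']
    push_cast
    ring

/-- For a 1-lower bounded power series whose coefficient partial sums
satisfy `a₀ + ⋯ + aₙ ≤ C(n+1)`, the derivatives satisfy
`i!/(1-r)^{i+1} ≤ f⁽ⁱ⁾(r) ≤ C(i+1)!/(1-r)^{i+1}` for every `i ≥ 0` and `r ∈ (0,1)`. -/
theorem stmt9 (a : ℕ → ℝ) (ha : ∀ n, 1 ≤ a n) (C : ℝ) (hC : 0 < C)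
    (hsum : ∀ n : ℕ, (∑ i ∈ Finset.range (n + 1), a i) ≤ C * ((n : ℝ) + 1)) :
    ∀ i : ℕ, ∀ r : ℝ, r ∈ Set.Ioo (0 : ℝ) 1 →
      (Nat.factorial i : ℝ) / (1 - r) ^ (i + 1) ≤
          iteratedDeriv i (fun x : ℝ => ∑' n : ℕ, a n * x ^ n) r ∧
        iteratedDeriv i (fun x : ℝ => ∑' n : ℕ, a n * x ^ n) r ≤
          C * (Nat.factorial (i + 1) : ℝ) / (1 - r) ^ (i + 1) := by
  intro i r hr
  obtain ⟨hr0, hr1⟩ := hr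
  have habs : |r| < 1 := abs_lt.mpr ⟨by linarith, hr1⟩
  have habs' : ‖r‖ < 1 := by simpa using habs
  have ha0 : ∀ n, 0 ≤ a n := fun n => le_trans zero_le_one (ha n)
  have haC : ∀ n, a n ≤ C * ((n : ℝ) + 1) := fun n =>
    le_trans (Finset.single_le_sum (fun k _ => ha0 k) (Finset.self_mem_range_succ n)) (hsum n)
  have pba : PB a := ⟨C, 1, fun n => by rw [abs_of_nonneg (ha0 n), pow_one]; exact haC n⟩
  rw [iteratedDeriv_tsum_pb i a pba r habs]
  have hd0 : ∀ n : ℕ, (0 : ℝ) ≤ (((n + i).descFactorial i : ℕ) : ℝ) := fun n => Nat.cast_nonneg _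
  have hrn : ∀ n : ℕ, (0 : ℝ) ≤ r ^ n := fun n => pow_nonneg hr0.le n
  have h1r : (0 : ℝ) < 1 - r := by linarith
  constructor
  · -- lower bound
    have hsum1 : Summable (fun n : ℕ => (((n + i).descFactorial i : ℕ) : ℝ) * r ^ n) :=
      summable_descFactorial_mul_geometric_of_norm_lt_one i habs'
    have hsum2 : Summable
        (fun n : ℕ => (((n + i).descFactorial i : ℕ) : ℝ) * a (n + i) * r ^ n) :=
      ((PB_descFactorial i).mul (pba.shift i)).summable habs
    have hle : ∑' n : ℕ, (((n + i).descFactorial i : ℕ) : ℝ) * r ^ n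
        ≤ ∑' n : ℕ, (((n + i).descFactorial i : ℕ) : ℝ) * a (n + i) * r ^ n := by
      refine Summable.tsum_le_tsum (fun n => ?_) hsum1 hsum2
      nlinarith [hd0 n, hrn n, ha (n + i), mul_nonneg (hd0 n) (hrn n)]
    have hclosed : ∑' n : ℕ, (((n + i).descFactorial i : ℕ) : ℝ) * r ^ n
        = (Nat.factorial i : ℝ) / (1 - r) ^ (i + 1) := by
      have h1 : ∀ n : ℕ, (((n + i).descFactorial i : ℕ) : ℝ) * r ^ n
          = (Nat.factorial i : ℝ) * ((((n + i).choose i : ℕ) : ℝ) * r ^ n) := fun n => by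
        rw [Nat.descFactorial_eq_factorial_mul_choose]; push_cast; ring
      rw [tsum_congr h1, tsum_mul_left, tsum_choose_mul_geometric_of_norm_lt_one i habs',
        mul_one_div]
    rw [← hclosed]
    exact hle
  · -- upper bound
    set S : ℕ → ℝ := fun n => ∑ k ∈ Finset.range (n + 1), a k with hSdef
    set S' : ℕ → ℝ := fun n => ∑ k ∈ Finset.range n, a k with hS'def
    have hS0 : ∀ n, 0 ≤ S n := fun n => Finset.sum_nonneg fun k _ => ha0 k
    have hS'0 : ∀ n, 0 ≤ S' n := fun n => Finset.sum_nonneg fun k _ => ha0 k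
    have hSC : ∀ n, S n ≤ C * ((n : ℝ) + 1) := fun n => hsum n
    have hS'S : ∀ n, S' n ≤ S n := fun n => by
      rw [hSdef, hS'def]; simp only; rw [Finset.sum_range_succ]; nlinarith [ha0 n]
    have pbS : PB S := ⟨C, 1, fun n => by rw [abs_of_nonneg (hS0 n), pow_one]; exact hSC n⟩
    have pbS' : PB S' := ⟨C, 1, fun n => by
      rw [abs_of_nonneg (hS'0 n), pow_one]; exact le_trans (hS'S n) (hSC n)⟩
    have haSS' : ∀ m, a m = S m - S' m := fun m => by
      rw [hSdef, hS'def]; simp only; rw [Finset.sum_range_succ]; ring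
    have hB : Summable (fun n : ℕ => (((n + i).descFactorial i : ℕ) : ℝ) * S (n + i) * r ^ n) :=
      ((PB_descFactorial i).mul (pbS.shift i)).summable habs
    have hB' : Summable (fun n : ℕ => (((n + i).descFactorial i : ℕ) : ℝ) * S' (n + i) * r ^ n) :=
      ((PB_descFactorial i).mul (pbS'.shift i)).summable habs
    have hsplit : ∑' n : ℕ, (((n + i).descFactorial i : ℕ) : ℝ) * a (n + i) * r ^ n
        = (∑' n : ℕ, (((n + i).descFactorial i : ℕ) : ℝ) * S (n + i) * r ^ n)
          - ∑' n : ℕ, (((n + i).descFactorial i : ℕ) : ℝ) * S' (n + i) * r ^ n := by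
      rw [← Summable.tsum_sub hB hB']
      exact tsum_congr fun n => by rw [haSS' (n + i)]; ring
    -- bound on B
    have hclosed2 : ∑' n : ℕ, ((((n + (i + 1)).descFactorial (i + 1) : ℕ)) : ℝ) * r ^ n
        = (Nat.factorial (i + 1) : ℝ) * (1 / (1 - r) ^ (i + 2)) := by
      have h1 : ∀ n : ℕ, ((((n + (i + 1)).descFactorial (i + 1) : ℕ)) : ℝ) * r ^ n
          = (Nat.factorial (i + 1) : ℝ) * ((((n + (i + 1)).choose (i + 1) : ℕ) : ℝ) * r ^ n) :=
        fun n => by rw [Nat.descFactorial_eq_factorial_mul_choose]; push_cast; ring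
      rw [tsum_congr h1, tsum_mul_left, tsum_choose_mul_geometric_of_norm_lt_one (i + 1) habs']
    have hBle : ∑' n : ℕ, (((n + i).descFactorial i : ℕ) : ℝ) * S (n + i) * r ^ n
        ≤ C * ((Nat.factorial (i + 1) : ℝ) * (1 / (1 - r) ^ (i + 2))) := by
      have hsum3 : Summable
          (fun n : ℕ => C * (((((n + (i + 1)).descFactorial (i + 1) : ℕ)) : ℝ) * r ^ n)) :=
        (summable_descFactorial_mul_geometric_of_norm_lt_one (i + 1) habs').mul_left C
      have hterm : ∀ n : ℕ, (((n + i).descFactorial i : ℕ) : ℝ) * S (n + i) * r ^ n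
          ≤ C * (((((n + (i + 1)).descFactorial (i + 1) : ℕ)) : ℝ) * r ^ n) := by
        intro n
        have h1 : S (n + i) ≤ C * (((n + i : ℕ) : ℝ) + 1) := by
          have := hSC (n + i); push_cast at this ⊢; linarith
        have h2 : ((((n + (i + 1)).descFactorial (i + 1) : ℕ)) : ℝ)
            = ((((n + i : ℕ)) : ℝ) + 1) * (((n + i).descFactorial i : ℕ) : ℝ) := by
          rw [show n + (i + 1) = (n + i) + 1 from rfl, Nat.succ_descFactorial_succ]
          push_cast; ring
        rw [h2]
        calc (((n + i).descFactorial i : ℕ) : ℝ) * S (n + i) * r ^ n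
            ≤ (((n + i).descFactorial i : ℕ) : ℝ) * (C * (((n + i : ℕ) : ℝ) + 1)) * r ^ n :=
              mul_le_mul_of_nonneg_right (mul_le_mul_of_nonneg_left h1 (hd0 n)) (hrn n)
          _ = C * (((((n + i : ℕ)) : ℝ) + 1) * (((n + i).descFactorial i : ℕ) : ℝ) * r ^ n) := by
              ring
      refine le_trans (Summable.tsum_le_tsum hterm hB hsum3) ?_
      rw [tsum_mul_left, hclosed2]
    -- B' ≥ r * B
    have hmono : ∀ n : ℕ, (((n + i).descFactorial i : ℕ) : ℝ)
        ≤ (((n + 1 + i).descFactorial i : ℕ) : ℝ) := by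
      intro n
      have : (n + i).descFactorial i ≤ (n + 1 + i).descFactorial i := by
        rw [Nat.descFactorial_eq_factorial_mul_choose, Nat.descFactorial_eq_factorial_mul_choose]
        exact Nat.mul_le_mul_left _ (Nat.choose_le_choose i (by omega))
      exact_mod_cast this
    have hshift : Summable
        (fun n : ℕ => (((n + i).descFactorial i : ℕ) : ℝ) * S (n + i) * r ^ (n + 1)) :=
      (hB.mul_left r).congr fun n => by ring
    have hmid : Summable
        (fun n : ℕ => (((n + 1 + i).descFactorial i : ℕ) : ℝ) * S (n + i) * r ^ (n + 1)) := by
      have h := (((PB_descFactorial i).shift 1).mul (pbS.shift i)).summable habs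
      exact (h.mul_left r).congr fun n => by ring
    have hrB : r * (∑' n : ℕ, (((n + i).descFactorial i : ℕ) : ℝ) * S (n + i) * r ^ n)
        ≤ ∑' n : ℕ, (((n + i).descFactorial i : ℕ) : ℝ) * S' (n + i) * r ^ n := by
      have e1 : r * (∑' n : ℕ, (((n + i).descFactorial i : ℕ) : ℝ) * S (n + i) * r ^ n)
          = ∑' n : ℕ, (((n + i).descFactorial i : ℕ) : ℝ) * S (n + i) * r ^ (n + 1) := by
        rw [← tsum_mul_left]; exact tsum_congr fun n => by ring
      have e2 : ∑' n : ℕ, (((n + i).descFactorial i : ℕ) : ℝ) * S (n + i) * r ^ (n + 1)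
          ≤ ∑' n : ℕ, (((n + 1 + i).descFactorial i : ℕ) : ℝ) * S (n + i) * r ^ (n + 1) :=
        Summable.tsum_le_tsum (fun n => mul_le_mul_of_nonneg_right
          (mul_le_mul_of_nonneg_right (hmono n) (hS0 _)) (hrn _)) hshift hmid
      have e4 : ∀ n : ℕ, (((n + 1 + i).descFactorial i : ℕ) : ℝ) * S (n + i) * r ^ (n + 1)
          = (((n + 1 + i).descFactorial i : ℕ) : ℝ) * S' (n + 1 + i) * r ^ (n + 1) := by
        intro n
        have : S (n + i) = S' (n + 1 + i) := by
          simp only [hSdef, hS'def]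
          rw [show n + i + 1 = n + 1 + i from by omega]
        rw [this]
      have e3 : ∑' n : ℕ, (((n + 1 + i).descFactorial i : ℕ) : ℝ) * S (n + i) * r ^ (n + 1)
          ≤ ∑' n : ℕ, (((n + i).descFactorial i : ℕ) : ℝ) * S' (n + i) * r ^ n := by
        rw [Summable.tsum_eq_zero_add hB', tsum_congr e4]
        have hfirst : 0 ≤ (((0 + i).descFactorial i : ℕ) : ℝ) * S' (0 + i) * r ^ 0 := by
          have := hS'0 (0 + i); positivity
        linarith [le_refl (∑' n : ℕ,
          (((n + 1 + i).descFactorial i : ℕ) : ℝ) * S' (n + 1 + i) * r ^ (n + 1))]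
      calc r * (∑' n : ℕ, (((n + i).descFactorial i : ℕ) : ℝ) * S (n + i) * r ^ n)
          = ∑' n : ℕ, (((n + i).descFactorial i : ℕ) : ℝ) * S (n + i) * r ^ (n + 1) := e1
        _ ≤ ∑' n : ℕ, (((n + 1 + i).descFactorial i : ℕ) : ℝ) * S (n + i) * r ^ (n + 1) := e2
        _ ≤ ∑' n : ℕ, (((n + i).descFactorial i : ℕ) : ℝ) * S' (n + i) * r ^ n := e3
    have halg : (1 - r) * (C * ((Nat.factorial (i + 1) : ℝ) * (1 / (1 - r) ^ (i + 2))))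
        = C * (Nat.factorial (i + 1) : ℝ) / (1 - r) ^ (i + 1) := by
      rw [show i + 2 = (i + 1) + 1 from rfl, pow_succ]
      field_simp
    rw [hsplit]
    calc (∑' n : ℕ, (((n + i).descFactorial i : ℕ) : ℝ) * S (n + i) * r ^ n)
          - ∑' n : ℕ, (((n + i).descFactorial i : ℕ) : ℝ) * S' (n + i) * r ^ n
        ≤ (∑' n : ℕ, (((n + i).descFactorial i : ℕ) : ℝ) * S (n + i) * r ^ n)
          - r * ∑' n : ℕ, (((n + i).descFactorial i : ℕ) : ℝ) * S (n + i) * r ^ n := by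
          linarith [hrB]
      _ = (1 - r) * ∑' n : ℕ, (((n + i).descFactorial i : ℕ) : ℝ) * S (n + i) * r ^ n := by
          ring
      _ ≤ (1 - r) * (C * ((Nat.factorial (i + 1) : ℝ) * (1 / (1 - r) ^ (i + 2)))) :=
          mul_le_mul_of_nonneg_left hBle h1r.le
      _ = C * (Nat.factorial (i + 1) : ℝ) / (1 - r) ^ (i + 1) := halg
end

section
/- Let (a_n)_{n≥0} satisfy a_n ≥ 1 for all n, and suppose there are constants C > 1, D > 0 and α ∈ [0,1) such that 0 ≤ C(n+1) − (a_0 + ⋯ + a_n) ≤ D(n+1)^α for all n ≥ 0. Set C₁ := D/min(C−1, 1). For k ≥ 2 let T_{n,k} := Σ_{x_1+⋯+x_k = n} (a_{x_1}−1)(a_{x_2}−1)⋯(a_{x_{k−1}}−1), the sum over k-tuples of nonnegative integers summing to n (the last coordinate contributing the factor 1). Then for all n ≥ 0 and k ≥ 2, (1 − C₁k(k−1)/(n+k−1)^{1−α}) · binom(n+k−1, k−1) · (C−1)^{k−1} ≤ T_{n,k} ≤ binom(n+k−1, k−1) · (C−1)^{k−1}. -/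
set_option maxHeartbeats 2000000

open Finset Finset.Nat

namespace Stmt10Aux

/-- Sum over `antidiagonalTuple (j+1) n` decomposes by first coordinate. -/
lemma sum_adT_succ {j n : ℕ} (f : (Fin (j + 1) → ℕ) → ℝ) :
    ∑ x ∈ antidiagonalTuple (j + 1) n, f x =
      ∑ pq ∈ antidiagonal n, ∑ y ∈ antidiagonalTuple j pq.2, f (Fin.cons pq.1 y) := by
  rw [← Finset.sum_sigma (antidiagonal n) (fun pq => antidiagonalTuple j pq.2)
      (fun p => f (Fin.cons p.1.1 p.2))]
  refine Finset.sum_nbij' (fun x => ⟨(x 0, n - x 0), Fin.tail x⟩)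
      (fun p => Fin.cons p.1.1 p.2) ?_ ?_ ?_ ?_ ?_
  · intro x hx
    rw [mem_antidiagonalTuple] at hx
    rw [Fin.sum_univ_succ] at hx
    simp only [Finset.mem_sigma, HasAntidiagonal.mem_antidiagonal, mem_antidiagonalTuple]
    constructor
    · omega
    · show ∑ i, Fin.tail x i = n - x 0
      have : ∑ i, Fin.tail x i = ∑ i : Fin j, x i.succ := rfl
      omega
  · intro p hp
    rw [Finset.mem_sigma, HasAntidiagonal.mem_antidiagonal] at hp
    rw [mem_antidiagonalTuple] at hp ⊢
    rw [Fin.sum_univ_succ]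
    simp only [Fin.cons_zero, Fin.cons_succ]
    rw [show (∑ i : Fin j, p.2 i) = p.1.2 from hp.2]
    exact hp.1
  · intro x hx
    exact Fin.cons_self_tail x
  · intro p hp
    rw [Finset.mem_sigma, HasAntidiagonal.mem_antidiagonal] at hp
    rcases p with ⟨⟨p1, p2⟩, y⟩
    simp only [Fin.cons_zero, Fin.tail_cons]
    have : n - p1 = p2 := by simp at hp; omega
    simp [this]
  · intro x hx
    rw [Fin.cons_self_tail x]




noncomputable def P (b : ℕ → ℝ) (j m : ℕ) : ℝ :=
  ∑ x ∈ antidiagonalTuple j m, ∏ i, b (x i)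

noncomputable def S (b : ℕ → ℝ) (r : ℕ) : ℝ := ∑ i ∈ Finset.range (r + 1), b i

noncomputable def U (b : ℕ → ℝ) (j n : ℕ) : ℝ := ∑ m ∈ Finset.range (n + 1), P b j m


lemma P_zero (b : ℕ → ℝ) (m : ℕ) : P b 0 m = if m = 0 then 1 else 0 := by
  cases m with
  | zero => simp [P, antidiagonalTuple_zero_zero]
  | succ m => simp [P, antidiagonalTuple_zero_succ]

lemma P_one (b : ℕ → ℝ) (m : ℕ) : P b 1 m = b m := by
  simp [P, antidiagonalTuple_one]

lemma P_succ (b : ℕ → ℝ) (j m : ℕ) :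
    P b (j + 1) m = ∑ pq ∈ antidiagonal m, b pq.1 * P b j pq.2 := by
  rw [P, sum_adT_succ]
  refine Finset.sum_congr rfl fun pq _ => ?_
  rw [P, Finset.mul_sum]
  refine Finset.sum_congr rfl fun y _ => ?_
  rw [Fin.prod_univ_succ]
  simp

lemma P_nonneg {b : ℕ → ℝ} (hb : ∀ i, 0 ≤ b i) (j m : ℕ) : 0 ≤ P b j m :=
  Finset.sum_nonneg fun x _ => Finset.prod_nonneg fun i _ => hb _

lemma U_nonneg {b : ℕ → ℝ} (hb : ∀ i, 0 ≤ b i) (j n : ℕ) : 0 ≤ U b j n :=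
  Finset.sum_nonneg fun m _ => P_nonneg hb j m

lemma U_zero (b : ℕ → ℝ) (n : ℕ) : U b 0 n = 1 := by
  induction n with
  | zero => simp [U, P_zero]
  | succ n ih =>
    rw [U, Finset.sum_range_succ, ← U, ih, P_zero]
    simp

lemma U_one (b : ℕ → ℝ) (n : ℕ) : U b 1 n = S b n := by
  simp [U, S, P_one]

/-- Triangular double sum rearrangement. -/
lemma tri (g h : ℕ → ℝ) (n : ℕ) :
    ∑ pq ∈ antidiagonal n, g pq.1 * (∑ i ∈ Finset.range (pq.2 + 1), h i) =
      ∑ m ∈ Finset.range (n + 1), ∑ pq ∈ antidiagonal m, g pq.1 * h pq.2 := by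
  induction n with
  | zero => simp [antidiagonal_zero]
  | succ n ih =>
    rw [Finset.sum_range_succ, ← ih]
    rw [Finset.Nat.sum_antidiagonal_eq_sum_range_succ_mk
      (f := fun pq => g pq.1 * (∑ i ∈ Finset.range (pq.2 + 1), h i)) (n := n + 1)]
    rw [Finset.Nat.sum_antidiagonal_eq_sum_range_succ_mk
      (f := fun pq => g pq.1 * (∑ i ∈ Finset.range (pq.2 + 1), h i)) (n := n)]
    rw [Finset.Nat.sum_antidiagonal_eq_sum_range_succ_mk
      (f := fun pq => g pq.1 * h pq.2) (n := n + 1)]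
    rw [Finset.sum_range_succ (n := n + 1), Finset.sum_range_succ (n := n + 1)]
    have key : ∀ k ∈ Finset.range (n + 1),
        g k * (∑ i ∈ Finset.range (n + 1 - k + 1), h i) =
        g k * (∑ i ∈ Finset.range (n - k + 1), h i) + g k * h (n + 1 - k) := by
      intro k hk
      rw [Finset.mem_range] at hk
      have h1 : n + 1 - k = (n - k) + 1 := by omega
      rw [h1, Finset.sum_range_succ, mul_add]
    rw [Finset.sum_congr rfl key, Finset.sum_add_distrib]
    simp only [Nat.sub_self]
    rw [Finset.sum_range_one]
    ring

/-- Hockey stick. -/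
lemma hockey (j n : ℕ) :
    ∑ m ∈ Finset.range (n + 1), ((m + j).choose j : ℝ) = ((n + j + 1).choose (j + 1) : ℝ) := by
  induction n with
  | zero => simp
  | succ n ih =>
    rw [Finset.sum_range_succ, ih]
    rw [show n + 1 + j + 1 = (n + j + 1) + 1 by omega,
      show n + 1 + j = n + j + 1 by omega,
      Nat.choose_succ_succ (n + j + 1) j]
    push_cast
    ring

lemma sum_antidiag_fst (f : ℕ → ℝ) (n : ℕ) :
    ∑ pq ∈ antidiagonal n, f pq.1 = ∑ k ∈ Finset.range (n + 1), f k := by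
  rw [Finset.Nat.sum_antidiagonal_eq_sum_range_succ_mk (f := fun pq => f pq.1)]

/-- Form A: recursion exposing partial sums of `b`. -/
lemma formA (b : ℕ → ℝ) (j n : ℕ) :
    U b (j + 1) n = ∑ pq ∈ antidiagonal n, P b j pq.1 * S b pq.2 := by
  rw [U]
  have : ∀ m, P b (j+1) m = ∑ pq ∈ antidiagonal m, P b j pq.1 * b pq.2 := by
    intro m
    rw [P_succ]
    rw [← Finset.Nat.sum_antidiagonal_swap (f := fun pq => P b j pq.1 * b pq.2)]
    exact Finset.sum_congr rfl fun pq _ => mul_comm _ _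
  rw [Finset.sum_congr rfl fun m _ => this m, ← tri]
  rfl

/-- weighted count identity -/
lemma formCount (b : ℕ → ℝ) (j n : ℕ) :
    ∑ pq ∈ antidiagonal n, P b j pq.1 * ((pq.2 : ℝ) + 1) =
      ∑ m ∈ Finset.range (n + 1), U b j m := by
  have : ∀ pq : ℕ × ℕ, P b j pq.1 * ((pq.2 : ℝ) + 1) =
      P b j pq.1 * (∑ i ∈ Finset.range (pq.2 + 1), (1 : ℝ)) := by
    intro pq; simp
  rw [Finset.sum_congr rfl fun pq _ => this pq, tri]
  refine Finset.sum_congr rfl fun m _ => ?_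
  rw [U, ← sum_antidiag_fst (fun k => P b j k) m]
  exact Finset.sum_congr rfl fun pq _ => (mul_one _)


section Bounds

variable {b : ℕ → ℝ} {c D α : ℝ}

lemma formB (b : ℕ → ℝ) (j n : ℕ) :
    U b (j + 1) n = ∑ pq ∈ antidiagonal n, b pq.1 * U b j pq.2 := by
  rw [U]
  rw [Finset.sum_congr rfl fun m _ => P_succ b j m, ← tri]
  rfl

lemma upper (hb : ∀ i, 0 ≤ b i) (hc : 0 < c)
    (hS_up : ∀ r : ℕ, S b r ≤ c * ((r : ℝ) + 1)) :
    ∀ (j n : ℕ), U b j n ≤ c ^ j * ((n + j).choose j : ℝ) := by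
  intro j
  induction j with
  | zero => intro n; simp [U_zero]
  | succ j ih =>
    intro n
    rw [formA]
    calc ∑ pq ∈ antidiagonal n, P b j pq.1 * S b pq.2
        ≤ ∑ pq ∈ antidiagonal n, P b j pq.1 * (c * ((pq.2 : ℝ) + 1)) := by
          refine Finset.sum_le_sum fun pq _ => ?_
          exact mul_le_mul_of_nonneg_left (hS_up pq.2) (P_nonneg hb j pq.1)
      _ = c * ∑ pq ∈ antidiagonal n, P b j pq.1 * ((pq.2 : ℝ) + 1) := by
          rw [Finset.mul_sum]; exact Finset.sum_congr rfl fun pq _ => by ring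
      _ = c * ∑ m ∈ Finset.range (n + 1), U b j m := by rw [formCount]
      _ ≤ c * ∑ m ∈ Finset.range (n + 1), c ^ j * ((m + j).choose j : ℝ) := by
          refine mul_le_mul_of_nonneg_left (Finset.sum_le_sum fun m _ => ih m) hc.le
      _ = c ^ (j + 1) * ((n + (j + 1)).choose (j + 1) : ℝ) := by
          rw [← Finset.mul_sum, hockey, show n + j + 1 = n + (j+1) by omega]
          ring

lemma lower (hb : ∀ i, 0 ≤ b i) (hc : 0 < c) (hD : 0 < D) (hα0 : 0 ≤ α)
    (hS_up : ∀ r : ℕ, S b r ≤ c * ((r : ℝ) + 1))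
    (hS_lo : ∀ r : ℕ, c * ((r : ℝ) + 1) - D * ((r : ℝ) + 1) ^ α ≤ S b r) :
    ∀ (j n : ℕ), c ^ (j + 1) * ((n + j + 1).choose (j + 1) : ℝ) -
        ((j : ℝ) + 1) * D * ((n : ℝ) + 1) ^ α * c ^ j * ((n + j).choose j : ℝ) ≤
      U b (j + 1) n := by
  intro j
  induction j with
  | zero =>
    intro n
    rw [U_one]
    have := hS_lo n
    simp only [zero_add, pow_one, pow_zero, Nat.add_zero, Nat.choose_one_right,
      Nat.choose_zero_right, Nat.cast_one, mul_one, one_mul]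
    push_cast
    linarith
  | succ j ih =>
    intro n
    have hA : (0:ℝ) ≤ ((n : ℝ) + 1) ^ α := Real.rpow_nonneg (by positivity) α
    have step1 : c * (∑ m ∈ Finset.range (n + 1), U b (j+1) m)
        - D * ((n : ℝ) + 1) ^ α * U b (j+1) n ≤ U b (j + 1 + 1) n := by
      have hq : ∀ pq ∈ antidiagonal n,
          P b (j+1) pq.1 * (c * ((pq.2 : ℝ) + 1) - D * ((n : ℝ) + 1) ^ α) ≤
          P b (j+1) pq.1 * S b pq.2 := by
        intro pq hpq
        refine mul_le_mul_of_nonneg_left ?_ (P_nonneg hb _ _)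
        have hq2 : (pq.2 : ℝ) ≤ (n : ℝ) :=
          Nat.cast_le.mpr (by rw [HasAntidiagonal.mem_antidiagonal] at hpq; omega)
        have hle : ((pq.2 : ℝ) + 1) ^ α ≤ ((n : ℝ) + 1) ^ α :=
          Real.rpow_le_rpow (by positivity) (by linarith) hα0
        have := hS_lo pq.2
        nlinarith
      have key := Finset.sum_le_sum hq
      have e3 : U b (j+1) n = ∑ pq ∈ antidiagonal n, P b (j+1) pq.1 :=
        (sum_antidiag_fst (fun k => P b (j+1) k) n).symm
      have expand : ∑ pq ∈ antidiagonal n,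
            P b (j+1) pq.1 * (c * ((pq.2 : ℝ) + 1) - D * ((n : ℝ) + 1) ^ α)
          = c * (∑ pq ∈ antidiagonal n, P b (j+1) pq.1 * ((pq.2 : ℝ) + 1))
            - D * ((n : ℝ) + 1) ^ α * (∑ pq ∈ antidiagonal n, P b (j+1) pq.1) := by
        rw [Finset.mul_sum, Finset.mul_sum, ← Finset.sum_sub_distrib]
        exact Finset.sum_congr rfl fun pq _ => by ring
      rw [formA b (j+1) n, ← formCount b (j+1) n, e3]
      linarith [key, expand]
    -- lower bound for the partial-sum term
    have step2 : c ^ (j+1) * ((n + j + 2).choose (j + 2) : ℝ)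
        - ((j : ℝ) + 1) * D * ((n : ℝ) + 1) ^ α * c ^ j * ((n + j + 1).choose (j+1) : ℝ)
        ≤ ∑ m ∈ Finset.range (n + 1), U b (j+1) m := by
      have h1 : ∑ m ∈ Finset.range (n + 1),
          (c ^ (j + 1) * ((m + j + 1).choose (j + 1) : ℝ) -
            ((j : ℝ) + 1) * D * ((m : ℝ) + 1) ^ α * c ^ j * ((m + j).choose j : ℝ))
          ≤ ∑ m ∈ Finset.range (n + 1), U b (j+1) m :=
        Finset.sum_le_sum fun m _ => ih m
      rw [Finset.sum_sub_distrib, ← Finset.mul_sum] at h1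
      have h2 : ∑ m ∈ Finset.range (n+1), ((m + j + 1).choose (j + 1) : ℝ)
          = ((n + j + 2).choose (j + 2) : ℝ) := by
        have := hockey (j+1) n
        rw [Finset.sum_congr rfl fun m _ => by rw [show m + (j+1) = m + j + 1 by omega]] at this
        rw [this]; congr 1
      rw [h2] at h1
      refine le_trans ?_ h1
      have h3 : ∑ m ∈ Finset.range (n+1),
          ((j : ℝ) + 1) * D * ((m : ℝ) + 1) ^ α * c ^ j * ((m + j).choose j : ℝ)
          ≤ ((j : ℝ) + 1) * D * ((n : ℝ) + 1) ^ α * c ^ j * ((n + j + 1).choose (j+1) : ℝ) := by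
        calc ∑ m ∈ Finset.range (n+1),
            ((j : ℝ) + 1) * D * ((m : ℝ) + 1) ^ α * c ^ j * ((m + j).choose j : ℝ)
            ≤ ∑ m ∈ Finset.range (n+1),
              ((j : ℝ) + 1) * D * ((n : ℝ) + 1) ^ α * c ^ j * ((m + j).choose j : ℝ) := by
              refine Finset.sum_le_sum fun m hm => ?_
              have hmn : (m : ℝ) ≤ (n : ℝ) :=
                Nat.cast_le.mpr (by rw [Finset.mem_range] at hm; omega)
              have hle : ((m : ℝ) + 1) ^ α ≤ ((n : ℝ) + 1) ^ α :=
                Real.rpow_le_rpow (by positivity) (by linarith) hα0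
              have : (0:ℝ) ≤ ((j : ℝ) + 1) * D * c ^ j * ((m + j).choose j : ℝ) := by positivity
              nlinarith
          _ = ((j : ℝ) + 1) * D * ((n : ℝ) + 1) ^ α * c ^ j *
              ∑ m ∈ Finset.range (n+1), ((m + j).choose j : ℝ) := by
              rw [Finset.mul_sum]
          _ = ((j : ℝ) + 1) * D * ((n : ℝ) + 1) ^ α * c ^ j * ((n + j + 1).choose (j+1) : ℝ) := by
              rw [hockey]
      linarith
    have step3 : U b (j+1) n ≤ c ^ (j+1) * ((n + j + 1).choose (j+1) : ℝ) := by
      have := upper hb hc hS_up (j+1) n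
      rwa [show n + (j+1) = n + j + 1 by omega] at this
    -- combine
    have := mul_le_mul_of_nonneg_left step2 hc.le
    have h4 : D * ((n : ℝ) + 1) ^ α * U b (j+1) n ≤
        D * ((n : ℝ) + 1) ^ α * (c ^ (j+1) * ((n + j + 1).choose (j+1) : ℝ)) :=
      mul_le_mul_of_nonneg_left step3 (by positivity)
    have hgoal : c ^ (j + 1 + 1) * ((n + (j+1) + 1).choose (j + 1 + 1) : ℝ) -
        ((j : ℝ) + 1 + 1) * D * ((n : ℝ) + 1) ^ α * c ^ (j+1) * ((n + (j+1)).choose (j+1) : ℝ)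
        ≤ U b (j + 1 + 1) n := by
      rw [show n + (j+1) + 1 = n + j + 2 by omega, show j + 1 + 1 = j + 2 by omega,
        show n + (j+1) = n + j + 1 by omega]
      calc c ^ (j + 2) * ((n + j + 2).choose (j + 2) : ℝ) -
            ((j : ℝ) + 1 + 1) * D * ((n : ℝ) + 1) ^ α * c ^ (j+1) * ((n + j + 1).choose (j+1) : ℝ)
          ≤ c * (∑ m ∈ Finset.range (n + 1), U b (j+1) m)
            - D * ((n : ℝ) + 1) ^ α * U b (j+1) n := by
            have expand : c * (c ^ (j+1) * ((n + j + 2).choose (j + 2) : ℝ)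
              - ((j : ℝ) + 1) * D * ((n : ℝ) + 1) ^ α * c ^ j * ((n + j + 1).choose (j+1) : ℝ))
              - D * ((n : ℝ) + 1) ^ α * (c ^ (j+1) * ((n + j + 1).choose (j+1) : ℝ))
              = c ^ (j + 2) * ((n + j + 2).choose (j + 2) : ℝ) -
              ((j : ℝ) + 1 + 1) * D * ((n : ℝ) + 1) ^ α * c ^ (j+1) *
                ((n + j + 1).choose (j+1) : ℝ) := by ring
            linarith
        _ ≤ U b (j + 2) n := by
            rw [show j + 2 = j + 1 + 1 from rfl]; exact step1
    push_cast at hgoal ⊢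
    linarith
end Bounds

lemma idT (b : ℕ → ℝ) : ∀ (j n : ℕ),
    (∑ x ∈ antidiagonalTuple (j + 1) n,
      ∏ i : Fin (j + 1), if (i : ℕ) < j then b (x i) else 1) = U b j n := by
  intro j
  induction j with
  | zero =>
    intro n
    rw [U_zero, antidiagonalTuple_one]
    simp
  | succ j ih =>
    intro n
    rw [sum_adT_succ (f := fun x => ∏ i : Fin (j + 2), if (i : ℕ) < j + 1 then b (x i) else 1)]
    rw [formB]
    refine Finset.sum_congr rfl fun pq _ => ?_
    rw [← ih pq.2, Finset.mul_sum]
    refine Finset.sum_congr rfl fun y _ => ?_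
    rw [Fin.prod_univ_succ]
    simp only [Fin.cons_zero, Fin.cons_succ, Fin.val_zero, Fin.val_succ]
    congr 1
    · simp


end Stmt10Aux

open Stmt10Aux in
/-- Two-sided estimate for
`T_{n,k} = Σ_{x₁+⋯+x_k=n} (a_{x₁}-1)⋯(a_{x_{k-1}}-1)` (last coordinate contributing
the factor 1) under the two-sided partial-sum condition, with `C₁ = D / min(C-1, 1)`. -/
theorem stmt10 (a : ℕ → ℝ) (ha : ∀ n, 1 ≤ a n)
    (C D α : ℝ) (hC : 1 < C) (hD : 0 < D) (hα0 : 0 ≤ α) (hα1 : α < 1)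
    (hsum : ∀ n : ℕ,
      0 ≤ C * ((n : ℝ) + 1) - ∑ i ∈ Finset.range (n + 1), a i ∧
      C * ((n : ℝ) + 1) - ∑ i ∈ Finset.range (n + 1), a i ≤ D * ((n : ℝ) + 1) ^ α)
    (n k : ℕ) (hk : 2 ≤ k) :
    (1 - (D / min (C - 1) 1) * k * ((k : ℝ) - 1) / ((n : ℝ) + k - 1) ^ ((1 : ℝ) - α)) *
        (Nat.choose (n + k - 1) (k - 1) : ℝ) * (C - 1) ^ (k - 1) ≤
      (∑ x ∈ Finset.Nat.antidiagonalTuple k n,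
        ∏ i : Fin k, if (i : ℕ) < k - 1 then a (x i) - 1 else 1) ∧
    (∑ x ∈ Finset.Nat.antidiagonalTuple k n,
        ∏ i : Fin k, if (i : ℕ) < k - 1 then a (x i) - 1 else 1) ≤
      (Nat.choose (n + k - 1) (k - 1) : ℝ) * (C - 1) ^ (k - 1) := by
  obtain ⟨j, rfl⟩ : ∃ j, k = j + 2 := ⟨k - 2, by omega⟩
  set b : ℕ → ℝ := fun m => a m - 1 with hbdef
  have hb : ∀ i, 0 ≤ b i := fun i => by simp only [hbdef]; linarith [ha i]
  set c := C - 1 with hcdef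
  have hc0 : 0 < c := by simp only [hcdef]; linarith
  have hSsplit : ∀ r : ℕ, S b r = (∑ i ∈ Finset.range (r + 1), a i) - ((r : ℝ) + 1) := by
    intro r
    simp only [S, hbdef, Finset.sum_sub_distrib, Finset.sum_const, Finset.card_range,
      nsmul_eq_mul, mul_one]
    push_cast
    ring
  have hS_up : ∀ r : ℕ, S b r ≤ c * ((r : ℝ) + 1) := by
    intro r
    have := (hsum r).1
    rw [hSsplit r, hcdef]
    linarith
  have hS_lo : ∀ r : ℕ, c * ((r : ℝ) + 1) - D * ((r : ℝ) + 1) ^ α ≤ S b r := by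
    intro r
    have := (hsum r).2
    rw [hSsplit r, hcdef]
    linarith
  -- identity
  have hid : (∑ x ∈ Finset.Nat.antidiagonalTuple (j + 2) n,
      ∏ i : Fin (j + 2), if (i : ℕ) < j + 2 - 1 then a (x i) - 1 else 1) = U b (j + 1) n := by
    have := idT b (j + 1) n
    simpa using this
  have hkm1 : j + 2 - 1 = j + 1 := rfl
  have hnk : n + (j + 2) - 1 = n + j + 1 := by omega
  rw [hid, hkm1, hnk]
  set B1 : ℝ := ((n + j + 1).choose (j + 1) : ℝ) with hB1
  set B0 : ℝ := ((n + j).choose j : ℝ) with hB0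
  have hB1n : (0:ℝ) ≤ B1 := Nat.cast_nonneg _
  have hB0n : (0:ℝ) ≤ B0 := Nat.cast_nonneg _
  constructor
  · -- lower bound
    have hlow := lower hb hc0 hD hα0 hS_up hS_lo j n
    set N : ℝ := (n : ℝ) + ↑(j + 2) - 1 with hN
    have hN' : N = (n : ℝ) + (j : ℝ) + 1 := by rw [hN]; push_cast; ring
    have hNpos : (0:ℝ) < N := by rw [hN']; positivity
    have hMpos : (0:ℝ) < N ^ α := Real.rpow_pos_of_pos hNpos α
    have hNpow : N ^ ((1:ℝ) - α) = N / N ^ α := by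
      rw [Real.rpow_sub hNpos, Real.rpow_one]
    -- key binomial identity
    have hNB : ((j : ℝ) + 1) * B1 = N * B0 := by
      rw [hN', hB1, hB0]
      have := Nat.add_one_mul_choose_eq (n + j) j
      have hcast : ((n + j + 1) * ((n + j).choose j) : ℕ) = (((n + j + 1).choose (j + 1)) * (j + 1) : ℕ) := by
        simpa [Nat.succ_eq_add_one] using this
      have := congrArg (fun x : ℕ => (x : ℝ)) hcast
      push_cast at this
      linarith
    set C₁ : ℝ := D / min c 1 with hC₁
    have hmin : 0 < min c 1 := lt_min hc0 one_pos
    have hC₁c : D ≤ C₁ * c := by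
      rw [hC₁, div_mul_eq_mul_div, le_div_iff₀ hmin]
      have : min c 1 ≤ c := min_le_left _ _
      nlinarith
    have hC₁pos : 0 < C₁ := div_pos hD hmin
    have hAM : ((n:ℝ) + 1) ^ α ≤ N ^ α := by
      refine Real.rpow_le_rpow (by positivity) ?_ hα0
      rw [hN']
      have : (0:ℝ) ≤ (j:ℝ) := Nat.cast_nonneg _
      linarith
    have hA0 : (0:ℝ) ≤ ((n:ℝ) + 1) ^ α := Real.rpow_nonneg (by positivity) α
    -- the subtracted term comparison
    have hkey : ((j : ℝ) + 1) * D * ((n : ℝ) + 1) ^ α * c ^ j * B0 ≤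
        C₁ * ((j : ℝ) + 2) * (((j : ℝ) + 1) * B1) * c ^ (j + 1) / N * N ^ α := by
      have hre : C₁ * ((j : ℝ) + 2) * (((j : ℝ) + 1) * B1) * c ^ (j + 1) / N * N ^ α
          = ((j : ℝ) + 2) * (C₁ * c) * N ^ α * c ^ j * B0 := by
        rw [hNB]
        field_simp
        ring
      rw [hre]
      have h1 : ((j : ℝ) + 1) * D * (((n:ℝ)+1) ^ α) ≤ ((j : ℝ) + 2) * (C₁ * c) * N ^ α := by
        have hj1 : (0:ℝ) ≤ (j:ℝ) + 1 := by positivity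
        have hstep : ((j : ℝ) + 1) * D ≤ ((j : ℝ) + 2) * (C₁ * c) := by nlinarith
        have hY : (0:ℝ) ≤ ((j : ℝ) + 2) * (C₁ * c) := by
          have h5 := mul_pos hC₁pos hc0
          have h6 : (0:ℝ) ≤ (j:ℝ) := Nat.cast_nonneg _
          nlinarith
        exact mul_le_mul hstep hAM hA0 hY
      have h2 : (0:ℝ) ≤ c ^ j * B0 := by positivity
      calc ((j : ℝ) + 1) * D * ((n : ℝ) + 1) ^ α * c ^ j * B0
          = (((j : ℝ) + 1) * D * ((n : ℝ) + 1) ^ α) * (c ^ j * B0) := by ring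
        _ ≤ (((j : ℝ) + 2) * (C₁ * c) * N ^ α) * (c ^ j * B0) :=
            mul_le_mul_of_nonneg_right h1 h2
        _ = ((j : ℝ) + 2) * (C₁ * c) * N ^ α * c ^ j * B0 := by ring
    -- rewrite goal
    have hgc : (1 - C₁ * ((j:ℝ) + 2) * (((j:ℝ) + 2) - 1) / N ^ ((1:ℝ) - α)) * B1 * c ^ (j + 1)
        = c ^ (j+1) * B1 - C₁ * ((j : ℝ) + 2) * (((j : ℝ) + 1) * B1) * c ^ (j + 1) / N * N ^ α := by
      rw [hNpow]
      field_simp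
      ring
    have hfin : (1 - C₁ * ((j:ℝ) + 2) * (((j:ℝ) + 2) - 1) / N ^ ((1:ℝ) - α)) * B1 * c ^ (j + 1)
        ≤ U b (j+1) n := by
      rw [hgc]
      have : c ^ (j + 1) * B1 - C₁ * ((j : ℝ) + 2) * (((j : ℝ) + 1) * B1) * c ^ (j + 1) / N * N ^ α
          ≤ c ^ (j + 1) * B1 - ((j : ℝ) + 1) * D * ((n : ℝ) + 1) ^ α * c ^ j * B0 := by
        linarith
      exact this.trans hlow
    convert hfin using 2
    push_cast
    ring
  · -- upper bound
    have := upper hb hc0 hS_up (j + 1) n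
    rw [show n + (j + 1) = n + j + 1 by omega] at this
    linarith [this]
end

section
/- Let (a_n)_{n≥0} satisfy a_n ≥ 1 for all n, and suppose there are constants C > 1, D > 0 and α ∈ [0,1) with 0 ≤ C(n+1) − (a_0 + ⋯ + a_n) ≤ D(n+1)^α for all n ≥ 0. Set C₁ := D/min(C−1, 1). For a tuple I = (i_1,…,i_k) ∈ {0,1}^k, write a^{(0)}_x = 1 and a^{(1)}_x = a_x − 1, and set a^I_n := Σ_{x_1+⋯+x_k=n} a^{(i_1)}_{x_1}⋯a^{(i_k)}_{x_k}, summing over k-tuples of nonnegative integers with sum n. If k ≥ 2 and I has k₀ ≥ 1 zero entries and k₁ one entries, then for all n ≥ 0, (1 − C₁k(k−1)/(n+k−1)^{1−α}) · binom(n+k−1, k−1) · (C−1)^{k₁} ≤ a^I_n ≤ binom(n+k−1, k−1) · (C−1)^{k₁}. -/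
open Finset

namespace Stmt11Aux

noncomputable def S (f : ℕ → ℝ) : ℕ → ℝ := fun n => ∑ m ∈ Finset.range (n + 1), f m

noncomputable def conv (b f : ℕ → ℝ) : ℕ → ℝ :=
  fun n => ∑ m ∈ Finset.range (n + 1), b m * f (n - m)

noncomputable def dlt : ℕ → ℝ := fun n => if n = 0 then 1 else 0

lemma conv_comm (b f : ℕ → ℝ) : conv b f = conv f b := by
  funext n
  unfold conv
  rw [← Finset.sum_range_reflect]
  refine Finset.sum_congr rfl fun i hi => ?_
  have hin : i ≤ n := by simpa [Nat.lt_succ_iff] using hi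
  have h1 : n + 1 - 1 - i = n - i := by omega
  have h2 : n - (n - i) = i := by omega
  rw [h1, h2, mul_comm]

lemma S_conv (b f : ℕ → ℝ) (n : ℕ) :
    S (conv b f) n = ∑ p ∈ Finset.range (n + 1), f p * S b (n - p) := by
  rw [conv_comm]
  unfold S conv
  rw [Finset.sum_comm' (t' := Finset.range (n+1)) (s' := fun p => Finset.Ico p (n+1))
    (by intro q p; simp [Nat.lt_succ_iff]; omega)]
  refine Finset.sum_congr rfl fun p hp => ?_
  have hpn : p ≤ n := by simpa [Nat.lt_succ_iff] using hp
  rw [← Finset.mul_sum]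
  congr 1
  rw [Finset.sum_Ico_eq_sum_range]
  have h3 : n + 1 - p = n - p + 1 := by omega
  rw [h3]
  refine Finset.sum_congr rfl fun r hr => ?_
  congr 1
  omega

lemma conv_S (b f : ℕ → ℝ) : conv b (S f) = S (conv b f) := by
  funext n
  have h := S_conv f b n
  rw [conv_comm] at h
  rw [h]
  rfl

lemma conv_S_iter (b : ℕ → ℝ) (j : ℕ) (f : ℕ → ℝ) :
    conv b (S^[j] f) = S^[j] (conv b f) := by
  induction j generalizing f with
  | zero => rfl
  | succ j ih =>
    rw [Function.iterate_succ_apply, Function.iterate_succ_apply, ih, conv_S]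

lemma conv_dlt (b : ℕ → ℝ) : conv b dlt = b := by
  funext n
  rw [conv_comm]
  unfold conv dlt
  simp [ite_mul, Finset.sum_ite_eq']

lemma S_dlt : S dlt = fun _ => (1 : ℝ) := by
  funext n
  unfold S dlt
  simp

lemma conv_one (f : ℕ → ℝ) : conv (fun _ => (1:ℝ)) f = S f := by
  rw [conv_comm]
  funext n
  unfold conv S
  simp

lemma S_one (n : ℕ) : S (fun _ => (1:ℝ)) n = (n : ℝ) + 1 := by
  unfold S; simp

lemma SS (f : ℕ → ℝ) (n : ℕ) :
    S (S f) n = ∑ p ∈ Finset.range (n + 1), f p * ((n : ℝ) - p + 1) := by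
  rw [← conv_one f, S_conv]
  refine Finset.sum_congr rfl fun p hp => ?_
  have hpn : p ≤ n := by simpa [Nat.lt_succ_iff] using hp
  rw [S_one]
  congr 1
  push_cast [hpn]
  ring

lemma S_iter_mono (j : ℕ) {f g : ℕ → ℝ} {n : ℕ} (h : ∀ m ≤ n, f m ≤ g m) :
    S^[j] f n ≤ S^[j] g n := by
  induction j generalizing f g with
  | zero => simpa using h n le_rfl
  | succ j ih =>
    rw [Function.iterate_succ_apply, Function.iterate_succ_apply]
    refine ih fun m hm => ?_
    unfold S
    refine Finset.sum_le_sum fun p hp => h p ?_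
    have : p ≤ m := by simpa [Nat.lt_succ_iff] using hp
    omega

lemma S_iter_nonneg (j : ℕ) {f : ℕ → ℝ} (h : ∀ m, 0 ≤ f m) (n : ℕ) :
    0 ≤ S^[j] f n := by
  induction j generalizing f with
  | zero => simpa using h n
  | succ j ih =>
    rw [Function.iterate_succ_apply]
    exact ih (f := S f) fun m => Finset.sum_nonneg fun p _ => h p

lemma S_iter_linear (j : ℕ) (c d : ℝ) (f g : ℕ → ℝ) (n : ℕ) :
    S^[j] (fun m => c * f m + d * g m) n = c * S^[j] f n + d * S^[j] g n := by
  induction j generalizing f g with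
  | zero => simp
  | succ j ih =>
    rw [Function.iterate_succ_apply, Function.iterate_succ_apply,
      Function.iterate_succ_apply]
    rw [show (S fun m => c * f m + d * g m) = fun m => c * S f m + d * S g m from ?_]
    · exact ih _ _
    · funext m
      unfold S
      rw [Finset.sum_add_distrib, Finset.mul_sum, Finset.mul_sum]

lemma S_iter_smul (j : ℕ) (c : ℝ) (f : ℕ → ℝ) (n : ℕ) :
    S^[j] (fun m => c * f m) n = c * S^[j] f n := by
  have := S_iter_linear j c 0 f f n
  simpa using this

lemma sum_choose_nat (j n : ℕ) :
    ∑ m ∈ Finset.range (n + 1), (m + j).choose j = (n + j + 1).choose (j + 1) := by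
  induction n with
  | zero => simp
  | succ n ih =>
    rw [Finset.sum_range_succ, ih]
    have : n + 1 + j + 1 = (n + j + 1) + 1 := by omega
    rw [this, Nat.choose_succ_succ (n + j + 1) j]
    have : n + 1 + j = n + j + 1 := by omega
    rw [this]
    simp [Nat.succ_eq_add_one]
    omega

lemma S_iter_one (j n : ℕ) :
    S^[j] (fun _ => (1:ℝ)) n = ((n + j).choose j : ℝ) := by
  induction j generalizing n with
  | zero => simp
  | succ j ih =>
    rw [Function.iterate_succ_apply']
    have h1 : S (S^[j] fun _ => (1:ℝ)) n = ∑ m ∈ Finset.range (n+1), ((m + j).choose j : ℝ) := by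
      unfold S
      exact Finset.sum_congr rfl fun m _ => ih m
    rw [h1, ← Nat.cast_sum, sum_choose_nat]
    norm_cast

lemma S_iter_dlt (j n : ℕ) : S^[j+1] dlt n = ((n + j).choose j : ℝ) := by
  rw [Function.iterate_succ_apply, S_dlt, S_iter_one]

lemma conv_iter_nonneg (b : ℕ → ℝ) (hb : ∀ m, 0 ≤ b m) (i : ℕ) (m : ℕ) :
    0 ≤ (conv b)^[i] dlt m := by
  induction i generalizing m with
  | zero => simp only [Function.iterate_zero, id]; unfold dlt; positivity
  | succ i ih =>
    rw [Function.iterate_succ_apply']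
    exact Finset.sum_nonneg fun p _ => mul_nonneg (hb p) (ih _)

lemma upper (b : ℕ → ℝ) (hb : ∀ m, 0 ≤ b m) (c : ℝ) (hc : 0 ≤ c)
    (hub : ∀ q : ℕ, S b q ≤ c * ((q : ℝ) + 1)) :
    ∀ (i j n : ℕ),
      S^[j+1] ((conv b)^[i] dlt) n ≤ c ^ i * ((n + j + i).choose (j + i) : ℝ) := by
  intro i
  induction i with
  | zero =>
    intro j n
    simp only [Function.iterate_zero, id, pow_zero, one_mul, Nat.add_zero]
    rw [S_iter_dlt]
  | succ i ih =>
    intro j n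
    set f := (conv b)^[i] dlt with hf
    have hfnn : ∀ m, 0 ≤ f m := conv_iter_nonneg b hb i
    have e1 : S^[j+1] ((conv b)^[i+1] dlt) n = S^[j] (S (conv b f)) n := by
      rw [Function.iterate_succ_apply' (conv b) i dlt, Function.iterate_succ_apply]
    have hpt : ∀ m ≤ n, S (conv b f) m ≤ c * S (S f) m := by
      intro m _
      rw [S_conv, SS, Finset.mul_sum]
      refine Finset.sum_le_sum fun p hp => ?_
      have hpm : p ≤ m := by simpa [Nat.lt_succ_iff] using hp
      have hcast : ((m - p : ℕ) : ℝ) = (m : ℝ) - p := by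
        push_cast [hpm]; ring
      have h := hub (m - p)
      rw [hcast] at h
      calc f p * S b (m - p) ≤ f p * (c * ((m:ℝ) - p + 1)) :=
            mul_le_mul_of_nonneg_left h (hfnn p)
        _ = c * (f p * ((m:ℝ) - p + 1)) := by ring
    calc S^[j+1] ((conv b)^[i+1] dlt) n
        = S^[j] (S (conv b f)) n := e1
      _ ≤ S^[j] (fun m => c * S (S f) m) n := S_iter_mono j hpt
      _ = c * S^[j] (S (S f)) n := S_iter_smul j c _ n
      _ = c * S^[(j+1)+1] f n := by
          rw [Function.iterate_succ_apply, Function.iterate_succ_apply]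
      _ ≤ c * (c ^ i * ((n + (j+1) + i).choose ((j+1) + i) : ℝ)) :=
          mul_le_mul_of_nonneg_left (ih (j+1) n) hc
      _ = c ^ (i+1) * ((n + j + (i+1)).choose (j + (i+1)) : ℝ) := by
          have e2 : n + (j+1) + i = n + j + (i+1) := by omega
          have e3 : (j+1) + i = j + (i+1) := by omega
          rw [e2, e3]; ring

lemma lower (b : ℕ → ℝ) (hb : ∀ m, 0 ≤ b m) (c : ℝ) (hc : 0 ≤ c)
    (hub : ∀ q : ℕ, S b q ≤ c * ((q : ℝ) + 1))
    (Dc α : ℝ) (hDc : 0 ≤ Dc) (hα0 : 0 ≤ α)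
    (hlb : ∀ q : ℕ, c * ((q:ℝ)+1) - Dc * ((q:ℝ)+1) ^ α ≤ S b q) :
    ∀ (l j n : ℕ),
      c ^ (l+1) * ((n + j + l + 1).choose (j + l + 1) : ℝ) -
        Dc * ((n:ℝ)+1) ^ α * ((l:ℝ)+1) * c ^ l * ((n + j + l).choose (j + l) : ℝ)
      ≤ S^[j+1] ((conv b)^[l+1] dlt) n := by
  have hrpow : ∀ (m p n : ℕ), p ≤ m → m ≤ n →
      ((m - p : ℕ) + 1 : ℝ) ^ α ≤ ((n:ℝ)+1) ^ α := by
    intro m p n hpm hmn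
    apply Real.rpow_le_rpow (by positivity) _ hα0
    have : (m - p : ℕ) ≤ n := by omega
    push_cast
    exact_mod_cast by exact_mod_cast add_le_add_left (Nat.cast_le.mpr this) 1
  intro l
  induction l with
  | zero =>
    intro j n
    have e1 : S^[j+1] ((conv b)^[0+1] dlt) n = S^[j] (S b) n := by
      rw [show (0:ℕ)+1 = 1 from rfl, Function.iterate_one, conv_dlt,
        Function.iterate_succ_apply]
    rw [e1]
    have hpt : ∀ m ≤ n,
        (fun m => c * ((m:ℝ) + 1) + (-(Dc * ((n:ℝ)+1)^α)) * 1) m ≤ S b m := by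
      intro m hmn
      have h1 := hlb m
      have h2 : ((m:ℝ)+1) ^ α ≤ ((n:ℝ)+1) ^ α := by
        apply Real.rpow_le_rpow (by positivity) _ hα0
        have : (m:ℝ) ≤ n := Nat.cast_le.mpr hmn
        linarith
      simp only
      nlinarith
    have hmono := S_iter_mono j hpt
    have hlin := S_iter_linear j c (-(Dc * ((n:ℝ)+1)^α)) (fun m => (m:ℝ)+1) (fun _ => 1) n
    rw [hlin] at hmono
    have e2 : S^[j] (fun m : ℕ => (m:ℝ)+1) n = ((n + j + 1).choose (j + 1) : ℝ) := by
      have : (fun m : ℕ => (m:ℝ)+1) = S (fun _ => (1:ℝ)) := by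
        funext m; rw [S_one]
      rw [this, ← Function.iterate_succ_apply, S_iter_one]
      norm_cast
    have e3 : S^[j] (fun _ => (1:ℝ)) n = ((n + j).choose j : ℝ) := S_iter_one j n
    rw [e2, e3] at hmono
    have final : c ^ (0+1) * ((n + j + 0 + 1).choose (j + 0 + 1) : ℝ) -
        Dc * ((n:ℝ)+1) ^ α * (((0:ℕ):ℝ)+1) * c ^ 0 * ((n + j + 0).choose (j + 0) : ℝ)
        = c * ((n + j + 1).choose (j + 1) : ℝ) +
            (-(Dc * ((n:ℝ)+1)^α)) * ((n + j).choose j : ℝ) := by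
      norm_num
      ring
    linarith [hmono, final]
  | succ l ih =>
    intro j n
    set f := (conv b)^[l+1] dlt with hf
    have hfnn : ∀ m, 0 ≤ f m := conv_iter_nonneg b hb (l+1)
    have e1 : S^[j+1] ((conv b)^[(l+1)+1] dlt) n = S^[j] (S (conv b f)) n := by
      rw [Function.iterate_succ_apply' (conv b) (l+1) dlt, Function.iterate_succ_apply]
    have hpt : ∀ m ≤ n,
        (fun m => c * S (S f) m + (-(Dc * ((n:ℝ)+1)^α)) * S f m) m ≤ S (conv b f) m := by
      intro m hmn
      simp only
      rw [S_conv, SS, Finset.mul_sum]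
      have eSf : S f m = ∑ p ∈ Finset.range (m+1), f p := rfl
      rw [eSf, Finset.mul_sum, ← Finset.sum_add_distrib]
      refine Finset.sum_le_sum fun p hp => ?_
      have hpm : p ≤ m := by simpa [Nat.lt_succ_iff] using hp
      have hcast : ((m - p : ℕ) : ℝ) = (m : ℝ) - p := by push_cast [hpm]; ring
      have h1 := hlb (m - p)
      rw [hcast] at h1
      have h2 := hrpow m p n hpm hmn
      rw [hcast] at h2
      have h3 : c * ((m:ℝ) - p + 1) - Dc * ((n:ℝ)+1)^α ≤ S b (m - p) := by
        have : Dc * ((m:ℝ) - p + 1)^α ≤ Dc * ((n:ℝ)+1)^α :=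
          mul_le_mul_of_nonneg_left h2 hDc
        linarith
      have h4 : f p * (c * ((m:ℝ) - p + 1) - Dc * ((n:ℝ)+1)^α) ≤ f p * S b (m - p) :=
        mul_le_mul_of_nonneg_left h3 (hfnn p)
      calc c * (f p * ((m:ℝ) - p + 1)) + (-(Dc * ((n:ℝ)+1)^α)) * f p
          = f p * (c * ((m:ℝ) - p + 1) - Dc * ((n:ℝ)+1)^α) := by ring
        _ ≤ f p * S b (m - p) := h4
    have hmono := S_iter_mono j hpt
    have hlin := S_iter_linear j c (-(Dc * ((n:ℝ)+1)^α)) (S (S f)) (S f) n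
    rw [hlin] at hmono
    have e2 : S^[j] (S (S f)) n = S^[(j+1)+1] f n := by
      rw [Function.iterate_succ_apply, Function.iterate_succ_apply]
    have e3 : S^[j] (S f) n = S^[j+1] f n := by
      rw [Function.iterate_succ_apply]
    rw [e2, e3] at hmono
    have hIH := ih (j+1) n
    have hU : S^[j+1] f n ≤ c ^ (l+1) * ((n + j + (l+1)).choose (j + (l+1)) : ℝ) :=
      upper b hb c hc hub (l+1) j n
    have hDn : 0 ≤ Dc * ((n:ℝ)+1)^α := by positivity
    have key : c * S^[(j+1)+1] f n + (-(Dc * ((n:ℝ)+1)^α)) * S^[j+1] f n ≥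
        c * (c ^ (l+1) * ((n + (j+1) + l + 1).choose ((j+1) + l + 1) : ℝ) -
          Dc * ((n:ℝ)+1) ^ α * ((l:ℝ)+1) * c ^ l * ((n + (j+1) + l).choose ((j+1) + l) : ℝ))
        + (-(Dc * ((n:ℝ)+1)^α)) * (c ^ (l+1) * ((n + j + (l+1)).choose (j + (l+1)) : ℝ)) := by
      have t1 := mul_le_mul_of_nonneg_left hIH hc
      have t2 := mul_le_mul_of_nonneg_left hU hDn
      nlinarith
    have hidx1 : n + (j+1) + l + 1 = n + j + (l+1) + 1 := by omega
    have hidx2 : (j+1) + l + 1 = j + (l+1) + 1 := by omega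
    have hidx3 : n + (j+1) + l = n + j + (l+1) := by omega
    have hidx4 : (j+1) + l = j + (l+1) := by omega
    rw [hidx1, hidx2, hidx3, hidx4] at key
    have final : c ^ (l+1+1) * ((n + j + (l+1) + 1).choose (j + (l+1) + 1) : ℝ) -
          Dc * ((n:ℝ)+1) ^ α * (((l+1 : ℕ):ℝ)+1) * c ^ (l+1) * ((n + j + (l+1)).choose (j + (l+1)) : ℝ)
        = c * (c ^ (l+1) * ((n + j + (l+1) + 1).choose (j + (l+1) + 1) : ℝ) -
            Dc * ((n:ℝ)+1) ^ α * ((l:ℝ)+1) * c ^ l * ((n + j + (l+1)).choose (j + (l+1)) : ℝ))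
          + (-(Dc * ((n:ℝ)+1)^α)) * (c ^ (l+1) * ((n + j + (l+1)).choose (j + (l+1)) : ℝ)) := by
      push_cast
      ring
    rw [e1]
    linarith [key, hmono, final]

lemma sum_adt_succ (k n : ℕ) (g : (Fin (k+1) → ℕ) → ℝ) :
    ∑ x ∈ Finset.Nat.antidiagonalTuple (k+1) n, g x =
      ∑ pq ∈ Finset.HasAntidiagonal.antidiagonal n, ∑ y ∈ Finset.Nat.antidiagonalTuple k pq.2,
        g (Fin.cons pq.1 y) := by
  rw [Finset.sum_sigma']
  refine Finset.sum_nbij' (fun x => ⟨(x 0, ∑ i : Fin k, x i.succ), Fin.tail x⟩)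
    (fun z => Fin.cons z.1.1 z.2) ?_ ?_ ?_ ?_ ?_
  · intro x hx
    rw [Finset.Nat.mem_antidiagonalTuple] at hx
    simp only [Finset.mem_sigma, Finset.Nat.mem_antidiagonalTuple, Finset.HasAntidiagonal.mem_antidiagonal]
    refine ⟨?_, rfl⟩
    rw [← hx, Fin.sum_univ_succ]
  · rintro ⟨⟨p, q⟩, y⟩ hz
    simp only [Finset.mem_sigma, Finset.Nat.mem_antidiagonalTuple,
      Finset.HasAntidiagonal.mem_antidiagonal] at hz
    have h1 : p + q = n := hz.1
    rw [Finset.Nat.mem_antidiagonalTuple, Fin.sum_cons, hz.2, h1]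
  · intro x hx
    simp [Fin.cons_self_tail]
  · rintro ⟨⟨p, q⟩, y⟩ hz
    simp only [Finset.mem_sigma, Finset.Nat.mem_antidiagonalTuple,
      Finset.HasAntidiagonal.mem_antidiagonal] at hz
    simp only [Fin.cons_zero, Fin.cons_succ, Fin.tail_cons]
    rw [show (∑ i : Fin k, y i) = q from hz.2]
  · intro x hx
    simp [Fin.cons_self_tail]

lemma adt_eq (b : ℕ → ℝ) : ∀ (k : ℕ) (I : Fin k → Bool) (n : ℕ),
    (∑ x ∈ Finset.Nat.antidiagonalTuple k n, ∏ i : Fin k, (if I i then b (x i) else 1)) =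
    S^[(Finset.univ.filter fun i => I i = false).card]
      ((conv b)^[(Finset.univ.filter fun i => I i = true).card] dlt) n := by
  intro k
  induction k with
  | zero =>
    intro I n
    have h0 : (Finset.univ.filter fun i : Fin 0 => I i = false).card = 0 := by simp
    have h1 : (Finset.univ.filter fun i : Fin 0 => I i = true).card = 0 := by simp
    rw [h0, h1]
    simp only [Function.iterate_zero, id]
    cases n with
    | zero => simp [Finset.Nat.antidiagonalTuple_zero_zero, dlt]
    | succ n => simp [Finset.Nat.antidiagonalTuple_zero_succ, dlt]
  | succ k ih =>
    intro I n
    rw [sum_adt_succ]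
    have step : ∀ pq : ℕ × ℕ,
        (∑ y ∈ Finset.Nat.antidiagonalTuple k pq.2,
          ∏ i : Fin (k+1), (if I i then b ((Fin.cons pq.1 y : Fin (k+1) → ℕ) i) else 1)) =
        (if I 0 then b pq.1 else 1) *
          S^[(Finset.univ.filter fun i : Fin k => I i.succ = false).card]
            ((conv b)^[(Finset.univ.filter fun i : Fin k => I i.succ = true).card] dlt)
            pq.2 := by
      intro pq
      have hy : ∀ y : Fin k → ℕ,
          (∏ i : Fin (k+1), (if I i then b ((Fin.cons pq.1 y : Fin (k+1) → ℕ) i) else 1)) =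
          (if I 0 then b pq.1 else 1) * ∏ i : Fin k, (if I i.succ then b (y i) else 1) := by
        intro y
        rw [Fin.prod_univ_succ]
        simp only [Fin.cons_zero, Fin.cons_succ]
      rw [Finset.sum_congr rfl fun y _ => hy y, ← Finset.mul_sum,
        ih (fun i => I i.succ) pq.2]
    rw [Finset.sum_congr rfl fun pq _ => step pq]
    have hc0 : (Finset.univ.filter fun i : Fin (k+1) => I i = false).card
        = (if I 0 = false then 1 else 0)
          + (Finset.univ.filter fun i : Fin k => I i.succ = false).card := by
      rw [Finset.card_filter, Finset.card_filter, Fin.sum_univ_succ]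
    have hc1 : (Finset.univ.filter fun i : Fin (k+1) => I i = true).card
        = (if I 0 = true then 1 else 0)
          + (Finset.univ.filter fun i : Fin k => I i.succ = true).card := by
      rw [Finset.card_filter, Finset.card_filter, Fin.sum_univ_succ]
    set c0' := (Finset.univ.filter fun i : Fin k => I i.succ = false).card with hc0'
    set c1' := (Finset.univ.filter fun i : Fin k => I i.succ = true).card with hc1'
    set V := S^[c0'] ((conv b)^[c1'] dlt) with hV
    cases hI0 : I 0 with
    | false =>
      have e0 : (Finset.univ.filter fun i : Fin (k+1) => I i = false).card = c0' + 1 := by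
        rw [hc0, hI0]; simp [add_comm]
      have e1 : (Finset.univ.filter fun i : Fin (k+1) => I i = true).card = c1' := by
        rw [hc1, hI0]; simp
      rw [e0, e1]
      simp only [Bool.false_eq_true, if_false, one_mul]
      have lhs_eq : (∑ pq ∈ Finset.HasAntidiagonal.antidiagonal n, V pq.2) = S V n := by
        rw [Finset.Nat.sum_antidiagonal_eq_sum_range_succ_mk]
        unfold S
        rw [← Finset.sum_range_reflect]
        refine Finset.sum_congr rfl fun i hi => ?_
        have : i ≤ n := by simpa [Nat.lt_succ_iff] using hi
        congr 1
        omega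
      rw [lhs_eq, hV, ← Function.iterate_succ_apply' S c0']
    | true =>
      have e0 : (Finset.univ.filter fun i : Fin (k+1) => I i = false).card = c0' := by
        rw [hc0, hI0]; simp
      have e1 : (Finset.univ.filter fun i : Fin (k+1) => I i = true).card = c1' + 1 := by
        rw [hc1, hI0]; simp [add_comm]
      rw [e0, e1]
      simp only [if_true]
      have lhs_eq : (∑ pq ∈ Finset.HasAntidiagonal.antidiagonal n, b pq.1 * V pq.2) = conv b V n := by
        rw [Finset.Nat.sum_antidiagonal_eq_sum_range_succ_mk]
        rfl
      rw [lhs_eq, hV, conv_S_iter, ← Function.iterate_succ_apply' (conv b) c1']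

end Stmt11Aux

open Stmt11Aux

/-- For a tuple `I ∈ {0,1}^k` (here `I : Fin k → Bool`, `true` meaning the
entry 1 and `false` meaning the entry 0) with `k₀ ≥ 1` zero entries and `k₁` one entries,
the convolution `a^I_n = Σ_{x₁+⋯+x_k=n} Π_i a^{(I i)}_{x_i}` (with `a^{(0)}_x = 1`,
`a^{(1)}_x = a_x - 1`) satisfies the two-sided estimate with `C₁ = D / min(C-1, 1)`. -/
theorem stmt11 (a : ℕ → ℝ) (ha : ∀ n, 1 ≤ a n)
    (C D α : ℝ) (hC : 1 < C) (hD : 0 < D) (hα0 : 0 ≤ α) (hα1 : α < 1)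
    (hsum : ∀ n : ℕ,
      0 ≤ C * ((n : ℝ) + 1) - ∑ i ∈ Finset.range (n + 1), a i ∧
      C * ((n : ℝ) + 1) - ∑ i ∈ Finset.range (n + 1), a i ≤ D * ((n : ℝ) + 1) ^ α)
    (k : ℕ) (hk : 2 ≤ k) (I : Fin k → Bool)
    (hk₀ : 1 ≤ (Finset.univ.filter fun i => I i = false).card)
    (n : ℕ) :
    (1 - (D / min (C - 1) 1) * k * ((k : ℝ) - 1) / ((n : ℝ) + k - 1) ^ ((1 : ℝ) - α)) *
        (Nat.choose (n + k - 1) (k - 1) : ℝ) *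
        (C - 1) ^ (Finset.univ.filter fun i => I i = true).card ≤
      (∑ x ∈ Finset.Nat.antidiagonalTuple k n,
        ∏ i : Fin k, if I i then a (x i) - 1 else 1) ∧
    (∑ x ∈ Finset.Nat.antidiagonalTuple k n,
        ∏ i : Fin k, if I i then a (x i) - 1 else 1) ≤
      (Nat.choose (n + k - 1) (k - 1) : ℝ) *
        (C - 1) ^ (Finset.univ.filter fun i => I i = true).card := by
  classical
  set b : ℕ → ℝ := fun m => a m - 1 with hbdef
  set c : ℝ := C - 1 with hcdef
  have hb : ∀ m, 0 ≤ b m := fun m => by simp [hbdef]; linarith [ha m]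
  have hc : 0 ≤ c := by simp [hcdef]; linarith
  have hSb : ∀ q : ℕ, S b q = (∑ i ∈ Finset.range (q+1), a i) - ((q:ℝ)+1) := by
    intro q
    unfold S
    rw [hbdef, Finset.sum_sub_distrib]
    simp
  have hub : ∀ q : ℕ, S b q ≤ c * ((q:ℝ)+1) := by
    intro q
    rw [hSb, hcdef]
    have := (hsum q).1
    linarith
  have hlb : ∀ q : ℕ, c * ((q:ℝ)+1) - D * ((q:ℝ)+1) ^ α ≤ S b q := by
    intro q
    rw [hSb, hcdef]
    have := (hsum q).2
    linarith
  set K0 := (Finset.univ.filter fun i : Fin k => I i = false).card with hK0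
  set K1 := (Finset.univ.filter fun i : Fin k => I i = true).card with hK1
  have hks : K0 + K1 = k := by
    rw [hK0, hK1, Finset.card_filter, Finset.card_filter, ← Finset.sum_add_distrib]
    have h1 : ∀ i : Fin k,
        ((if I i = false then 1 else 0) + (if I i = true then 1 else 0)) = 1 := by
      intro i; cases h : I i <;> simp
    rw [Finset.sum_congr rfl fun i _ => h1 i]
    simp
  obtain ⟨j, hj⟩ : ∃ j, K0 = j + 1 := ⟨K0 - 1, by omega⟩
  have hA : (∑ x ∈ Finset.Nat.antidiagonalTuple k n,
      ∏ i : Fin k, if I i then a (x i) - 1 else 1) = S^[K0] ((conv b)^[K1] dlt) n :=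
    adt_eq b k I n
  -- positivity facts
  have hk2 : (2:ℝ) ≤ (k:ℝ) := by exact_mod_cast hk
  have hMpos : (0:ℝ) < (n:ℝ) + k - 1 := by
    have : (0:ℝ) ≤ (n:ℝ) := Nat.cast_nonneg n
    linarith
  have hWpos : (0:ℝ) < ((n:ℝ) + k - 1) ^ ((1:ℝ) - α) := Real.rpow_pos_of_pos hMpos _
  have hmin : (0:ℝ) < min (C-1) 1 := lt_min (by linarith) one_pos
  have ht : 0 ≤ (D / min (C - 1) 1) * k * ((k : ℝ) - 1) / ((n : ℝ) + k - 1) ^ ((1 : ℝ) - α) := by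
    apply div_nonneg _ hWpos.le
    have h1 : 0 ≤ D / min (C-1) 1 := le_of_lt (div_pos hD hmin)
    have h2 : (0:ℝ) ≤ (k:ℝ) - 1 := by linarith
    positivity
  constructor
  · -- lower bound
    rw [hA, hj]
    rcases Nat.eq_zero_or_pos K1 with hK1z | hK1pos
    · -- K1 = 0
      rw [hK1z]
      simp only [Function.iterate_zero, id, pow_zero, mul_one]
      rw [S_iter_dlt]
      have hidx1 : n + k - 1 = n + j := by omega
      have hidx2 : k - 1 = j := by omega
      rw [hidx1, hidx2]
      have hBc : (0:ℝ) ≤ ((n+j).choose j : ℝ) := Nat.cast_nonneg _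
      nlinarith [ht, hBc]
    · obtain ⟨l, hl⟩ : ∃ l, K1 = l + 1 := ⟨K1 - 1, by omega⟩
      rw [hl]
      have hL := lower b hb c hc hub D α hD.le hα0 hlb l j n
      have hidx1 : n + k - 1 = n + j + l + 1 := by omega
      have hidx2 : k - 1 = j + l + 1 := by omega
      rw [hidx1, hidx2]
      set Bc : ℝ := ((n+j+l+1).choose (j+l+1) : ℝ) with hBc
      set Bs : ℝ := ((n+j+l).choose (j+l) : ℝ) with hBs
      set t : ℝ := (D / min (C - 1) 1) * k * ((k : ℝ) - 1) / ((n : ℝ) + k - 1) ^ ((1 : ℝ) - α)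
        with htdef
      set M : ℝ := (n:ℝ) + k - 1 with hM
      have hkc : (k:ℝ) - 1 = ((j+l+1 : ℕ) : ℝ) := by
        have : k = j + l + 2 := by omega
        rw [this]; push_cast; ring
      have hMc : M = ((n+j+l+1 : ℕ) : ℝ) := by
        have : k = j + l + 2 := by omega
        rw [hM, this]; push_cast; ring
      have hchoose : ((j+l+1 : ℕ) : ℝ) * Bc = ((n+j+l+1 : ℕ) : ℝ) * Bs := by
        rw [hBc, hBs]
        have := Nat.add_one_mul_choose_eq (n+j+l) (j+l)
        have h2 : (n+j+l+1) * ((n+j+l).choose (j+l)) = ((n+j+l+1).choose (j+l+1)) * (j+l+1) := by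
          simpa [Nat.succ_eq_add_one] using this
        exact_mod_cast by rw [mul_comm]; exact_mod_cast congrArg (Nat.cast (R := ℝ)) h2.symm
      have hMsplit : M ^ α * M ^ ((1:ℝ) - α) = M := by
        rw [← Real.rpow_add hMpos]
        norm_num
      have h1 : ((k:ℝ) - 1) * Bc = M ^ α * M ^ ((1:ℝ) - α) * Bs := by
        rw [hMsplit, hkc, hchoose, ← hMc]
      have hWne : M ^ ((1:ℝ) - α) ≠ 0 := ne_of_gt hWpos
      clear_value t M Bc Bs
      have heq : t * (Bc * c^(l+1)) = (D / min (C-1) 1) * c * (M ^ α) * (k:ℝ) * (c^l * Bs) := by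
        have hnum : (D / min (C-1) 1 * (k:ℝ) * ((k:ℝ)-1)) * (Bc * c^(l+1))
            = ((D / min (C-1) 1) * c * (M ^ α) * (k:ℝ) * (c^l * Bs)) * M ^ ((1:ℝ)-α) := by
          linear_combination (D / min (C-1) 1 * (k:ℝ) * c^(l+1)) * h1
        rw [htdef, div_mul_eq_mul_div, hnum, mul_div_cancel_right₀ _ hWne]
      have f1 : D ≤ (D / min (C-1) 1) * c := by
        rw [div_mul_eq_mul_div, le_div_iff₀ hmin]
        have : min (C-1) 1 ≤ c := by rw [hcdef]; exact min_le_left _ _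
        nlinarith
      have f2 : ((n:ℝ)+1) ^ α ≤ M ^ α := by
        apply Real.rpow_le_rpow (by positivity) _ hα0
        rw [hM]; linarith
      have f3 : ((l:ℝ)+1) ≤ (k:ℝ) := by
        have : l + 1 ≤ k := by omega
        exact_mod_cast this
      have hBs0 : (0:ℝ) ≤ Bs := by rw [hBs]; positivity
      have h0 : (0:ℝ) ≤ c^l * Bs := mul_nonneg (pow_nonneg hc l) hBs0
      have big : D * ((n:ℝ)+1)^α * ((l:ℝ)+1) * (c^l * Bs) ≤
          ((D / min (C-1) 1) * c) * (M ^ α) * (k:ℝ) * (c^l * Bs) := by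
        have s1 : D * ((n:ℝ)+1)^α ≤ ((D / min (C-1) 1) * c) * (M ^ α) :=
          mul_le_mul f1 f2 (by positivity) (mul_nonneg (div_nonneg hD.le hmin.le) hc)
        have s2 : D * ((n:ℝ)+1)^α * ((l:ℝ)+1) ≤
            ((D / min (C-1) 1) * c) * (M ^ α) * (k:ℝ) :=
          mul_le_mul s1 f3 (by positivity)
            (mul_nonneg (mul_nonneg (div_nonneg hD.le hmin.le) hc)
              (Real.rpow_nonneg hMpos.le α))
        exact mul_le_mul_of_nonneg_right s2 h0
      have key : D * ((n:ℝ)+1)^α * ((l:ℝ)+1) * c^l * Bs ≤ t * (Bc * c^(l+1)) := by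
        rw [heq]
        calc D * ((n:ℝ)+1)^α * ((l:ℝ)+1) * c^l * Bs
            = D * ((n:ℝ)+1)^α * ((l:ℝ)+1) * (c^l * Bs) := by ring
          _ ≤ _ := big
      have expand : (1 - t) * Bc * c^(l+1) = c^(l+1) * Bc - t * (Bc * c^(l+1)) := by ring
      linarith [hL, key]
  · -- upper bound
    rw [hA, hj]
    have hidx1 : n + k - 1 = n + j + K1 := by omega
    have hidx2 : k - 1 = j + K1 := by omega
    rw [hidx1, hidx2]
    have := upper b hb c hc hub K1 j n
    linarith [this]
end

section
/- Let f(z) = Σ_{n≥0} a_n z^n be a power series with a_n ≥ 1 for all n, and suppose there is a constant C > 0 with f(r) ≤ C/(1−r) for all r ∈ (0,1). Let c₈ > 0 be a constant such that |f(re^{iθ})| ≤ (1 − c₈ r · min(|θ|,1−r)²/(1−r)²)·f(r) for all r ∈ (0,1) and θ ∈ [−π,π). Then for every r ∈ (0,1), every θ₀ ∈ (0, π), every integer k ≥ 1 and every real α, the integral over the region θ₀ ≤ |θ| ≤ π satisfies |∫_{θ₀ ≤ |θ| ≤ π} θ² f(r e^{iθ})^k e^{−iαθ} dθ| ≤ π³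 · (1 − c₈ r · min(θ₀, 1−r)²/(1−r)²)^k · f(r)^k. -/
open MeasureTheory

/-- Minor-arc estimate: if `f(r) ≤ C/(1-r)` and
`|f(re^{iθ})| ≤ (1 - c₈ r min(|θ|,1-r)²/(1-r)²) f(r)`, then for every `r ∈ (0,1)`,
`θ₀ ∈ (0,π)`, `k ≥ 1` and real `α`, the integral of `θ² f(re^{iθ})^k e^{-iαθ}` over
`θ₀ ≤ |θ| ≤ π` is bounded by `π³ (1 - c₈ r min(θ₀,1-r)²/(1-r)²)^k f(r)^k`. -/
theorem stmt19 (a : ℕ → ℝ) (ha : ∀ n, 1 ≤ a n)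
    (C : ℝ) (hC : 0 < C)
    (hupper : ∀ r : ℝ, r ∈ Set.Ioo (0 : ℝ) 1 → (∑' n : ℕ, a n * r ^ n) ≤ C / (1 - r))
    (c₈ : ℝ) (hc₈ : 0 < c₈)
    (habs : ∀ r : ℝ, r ∈ Set.Ioo (0 : ℝ) 1 → ∀ θ : ℝ, θ ∈ Set.Ico (-Real.pi) Real.pi →
      ‖(∑' n : ℕ, (a n : ℂ) * ((r : ℂ) * Complex.exp (θ * Complex.I)) ^ n)‖ ≤
        (1 - c₈ * r * (min |θ| (1 - r)) ^ 2 / (1 - r) ^ 2) * ∑' n : ℕ, a n * r ^ n) :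
    ∀ r : ℝ, r ∈ Set.Ioo (0 : ℝ) 1 → ∀ θ₀ : ℝ, θ₀ ∈ Set.Ioo (0 : ℝ) Real.pi →
      ∀ k : ℕ, 1 ≤ k → ∀ α : ℝ,
        ‖(∫ θ in {θ : ℝ | θ₀ ≤ |θ| ∧ |θ| ≤ Real.pi},
            (θ : ℂ) ^ 2 *
              (∑' n : ℕ, (a n : ℂ) * ((r : ℂ) * Complex.exp (θ * Complex.I)) ^ n) ^ k *
              Complex.exp (-(α * θ : ℝ) * Complex.I))‖ ≤
          Real.pi ^ 3 * (1 - c₈ * r * (min θ₀ (1 - r)) ^ 2 / (1 - r) ^ 2) ^ k *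
            (∑' n : ℕ, a n * r ^ n) ^ k := by
  intro r hr θ₀ hθ₀ k hk α
  have hπ := Real.pi_pos
  set F : ℝ := ∑' n : ℕ, a n * r ^ n with hFdef
  set g : ℝ → ℂ := fun θ => ∑' n : ℕ, (a n : ℂ) * ((r : ℂ) * Complex.exp (θ * Complex.I)) ^ n
    with hgdef
  set B : ℝ := 1 - c₈ * r * (min θ₀ (1 - r)) ^ 2 / (1 - r) ^ 2 with hBdef
  set S : Set ℝ := {θ : ℝ | θ₀ ≤ |θ| ∧ |θ| ≤ Real.pi} with hSdef
  have hF : 0 ≤ F := tsum_nonneg (fun n => mul_nonneg (le_trans zero_le_one (ha n)) (pow_nonneg hr.1.le n))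
  have h1r : (0:ℝ) < 1 - r := by linarith [hr.2]
  -- B * F ≥ 0
  have hθ₀mem : θ₀ ∈ Set.Ico (-Real.pi) Real.pi := ⟨by linarith [hθ₀.1], hθ₀.2⟩
  have hBF : 0 ≤ B * F := by
    have h := habs r hr θ₀ hθ₀mem
    rw [abs_of_pos hθ₀.1] at h
    exact le_trans (norm_nonneg _) h
  -- pointwise bound on S minus {π}
  have hptwise : ∀ θ ∈ S, θ ≠ Real.pi → ‖g θ‖ ≤ B * F := by
    intro θ hθ hθne
    have habs_le : |θ| ≤ Real.pi := hθ.2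
    have h1 : -Real.pi ≤ θ := (abs_le.mp habs_le).1
    have h2 : θ < Real.pi := lt_of_le_of_ne (abs_le.mp habs_le).2 hθne
    have h := habs r hr θ ⟨h1, h2⟩
    refine h.trans ?_
    have hmin : min θ₀ (1 - r) ≤ min |θ| (1 - r) :=
      min_le_min hθ.1 le_rfl
    have hmin0 : 0 ≤ min θ₀ (1 - r) := le_min hθ₀.1.le h1r.le
    have hsq : (min θ₀ (1 - r)) ^ 2 ≤ (min |θ| (1 - r)) ^ 2 :=
      pow_le_pow_left₀ hmin0 hmin 2
    have hfac : (1 - c₈ * r * (min |θ| (1 - r)) ^ 2 / (1 - r) ^ 2) ≤ B := by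
      rw [hBdef]
      have : c₈ * r * (min θ₀ (1 - r)) ^ 2 / (1 - r) ^ 2 ≤
          c₈ * r * (min |θ| (1 - r)) ^ 2 / (1 - r) ^ 2 := by
        apply div_le_div_of_nonneg_right ?_ (pow_pos h1r 2).le
        have := mul_le_mul_of_nonneg_left hsq (mul_nonneg hc₈.le hr.1.le)
        linarith
      linarith
    exact mul_le_mul_of_nonneg_right hfac hF
  have hSsub : S ⊆ Set.Icc (-Real.pi) Real.pi := fun θ hθ => abs_le.mp hθ.2
  have hSmeas : MeasurableSet S := by
    have : S = {θ : ℝ | θ₀ ≤ |θ|} ∩ {θ : ℝ | |θ| ≤ Real.pi} := rfl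
    rw [this]
    exact ((isClosed_le continuous_const continuous_abs).measurableSet).inter
      ((isClosed_le continuous_abs continuous_const).measurableSet)
  -- integrability of dominating function
  have hint : IntegrableOn (fun θ : ℝ => θ ^ 2 * (B * F) ^ k) (Set.Icc (-Real.pi) Real.pi) := by
    exact (Continuous.integrableOn_Icc (by continuity))
  have hintS : IntegrableOn (fun θ : ℝ => θ ^ 2 * (B * F) ^ k) S := hint.mono_set hSsub
  -- a.e. bound
  have hne : ∀ᵐ θ : ℝ, θ ≠ Real.pi := by
    refine ae_iff.mpr ?_
    simpa using measure_singleton (Real.pi)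
  have hbound : ∀ᵐ (θ : ℝ) ∂(volume.restrict S),
      ‖(θ : ℂ) ^ 2 * (g θ) ^ k * Complex.exp (-(α * θ : ℝ) * Complex.I)‖ ≤
        θ ^ 2 * (B * F) ^ k := by
    rw [ae_restrict_iff' hSmeas]
    filter_upwards [hne] with θ hθne hθS
    have hgθ := hptwise θ hθS hθne
    have hnorm : ‖(θ : ℂ) ^ 2 * (g θ) ^ k * Complex.exp (-(α * θ : ℝ) * Complex.I)‖ =
        θ ^ 2 * ‖g θ‖ ^ k := by
      rw [norm_mul, norm_mul, norm_pow, norm_pow,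
        Complex.norm_real, Real.norm_eq_abs, sq_abs,
        show (-(↑(α * θ)) * Complex.I : ℂ) = ↑(-(α * θ)) * Complex.I by push_cast; ring,
        Complex.norm_exp_ofReal_mul_I, mul_one]
    rw [hnorm]
    exact mul_le_mul_of_nonneg_left
      (pow_le_pow_left₀ (norm_nonneg _) hgθ k) (sq_nonneg θ)
  calc ‖(∫ θ in S,
          (θ : ℂ) ^ 2 * (g θ) ^ k * Complex.exp (-(α * θ : ℝ) * Complex.I))‖
      = ‖∫ θ in S, (θ : ℂ) ^ 2 * (g θ) ^ k * Complex.exp (-(α * θ : ℝ) * Complex.I)‖ := by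
        rfl
    _ ≤ ∫ θ in S, ‖(θ : ℂ) ^ 2 * (g θ) ^ k * Complex.exp (-(α * θ : ℝ) * Complex.I)‖ :=
        norm_integral_le_integral_norm _
    _ ≤ ∫ θ in S, θ ^ 2 * (B * F) ^ k :=
        integral_mono_of_nonneg (Filter.Eventually.of_forall fun θ => norm_nonneg _)
          hintS hbound
    _ ≤ ∫ θ in Set.Icc (-Real.pi) Real.pi, θ ^ 2 * (B * F) ^ k := by
        apply setIntegral_mono_set hint ?_ (HasSubset.Subset.eventuallyLE hSsub)
        exact Filter.Eventually.of_forall fun θ => by positivity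
    _ ≤ Real.pi ^ 3 * B ^ k * F ^ k := by
        rw [integral_Icc_eq_integral_Ioc,
          ← intervalIntegral.integral_of_le (by linarith : -Real.pi ≤ Real.pi),
          intervalIntegral.integral_mul_const, integral_pow]
        have heq : (Real.pi ^ (2 + 1) - (-Real.pi) ^ (2 + 1)) / ((2 : ℕ) + 1 : ℝ) =
            2 / 3 * Real.pi ^ 3 := by push_cast; ring
        rw [heq]
        have hBFk : 0 ≤ (B * F) ^ k := pow_nonneg hBF k
        have h23 : 2 / 3 * Real.pi ^ 3 ≤ Real.pi ^ 3 := by nlinarith [pow_pos hπ 3]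
        calc 2 / 3 * Real.pi ^ 3 * (B * F) ^ k ≤ Real.pi ^ 3 * (B * F) ^ k :=
              mul_le_mul_of_nonneg_right h23 hBFk
          _ = Real.pi ^ 3 * B ^ k * F ^ k := by rw [mul_pow]; ring
end
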